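/- arXiv:1301.5703 — 3 statements merged into one kernel-verified Lean document; each statement's English description precedes it below -/
import Mathlib

section
/- Fix an integer h ≥ 2, a real constant c > 0, and a real δ with (h−1)/h < δ < 1. Fix two pairs of integers (s_1, d_1) and (s_2, d_2) with s_i ≥ d_i ≥ 0, s_i + d_i = h, and d_1 > d_2. For each N let A be a random subset of I_N in the binomial model with parameter p(N) = c·N^{−δ}. Then for every ε > 0, the probability that | |A_{s_1,d_1}| / |A_{s_2,d_2}| − (s_2!·d_2!)/(s_1!·d_1!) | > ε tends to 0 as N → ∞. In particular, since s_2!·d_2! > s_1!·d_1!, the probability that |A_{s_1,d_1}| > |A_{s_2,d_2}| tends to 1 as N → ∞. -/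
open Finset Filter

open Classical in
/-- Probability, under the binomial model on subsets of `I_N = {0, …, N}` with
parameter `p` (each element of `I_N` lies in `A` independently with probability `p`),
of the event `E`. -/
noncomputable def binomialProb (N : ℕ) (p : ℝ) (E : Finset ℕ → Prop) : ℝ :=
  ∑ A ∈ (Finset.range (N + 1)).powerset,
    if E A then p ^ A.card * (1 - p) ^ (N + 1 - A.card) else 0

/-- The generalized sumset `A_{s,d} = {a₁ + ⋯ + a_s - a_{s+1} - ⋯ - a_{s+d} : aᵢ ∈ A}`. -/
def genSumset (s d : ℕ) (A : Finset ℤ) : Finset ℤ :=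
  (Fintype.piFinset fun _ : Fin (s + d) => A).image fun a =>
    ∑ i : Fin (s + d), if (i : ℕ) < s then a i else -a i

namespace FDR

noncomputable def w (N : ℕ) (p : ℝ) (A : Finset ℕ) : ℝ :=
  p ^ A.card * (1 - p) ^ (N + 1 - A.card)

open Classical in
lemma binomialProb_eq (N : ℕ) (p : ℝ) (E : Finset ℕ → Prop) :
    binomialProb N p E
      = ∑ A ∈ (Finset.range (N + 1)).powerset, if E A then w N p A else 0 := rfl

lemma sum_pow_powerset (S : Finset ℕ) (p q : ℝ) :
    ∑ A ∈ S.powerset, p ^ A.card * q ^ (S.card - A.card) = (p + q) ^ S.card := by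
  have h := Finset.prod_add (fun _ : ℕ => p) (fun _ : ℕ => q) S
  simp only [Finset.prod_const] at h
  rw [h]
  exact Finset.sum_congr rfl fun A hA => by
    rw [Finset.card_sdiff_of_subset (Finset.mem_powerset.mp hA)]

lemma sum_w (N : ℕ) (p : ℝ) : ∑ A ∈ (Finset.range (N+1)).powerset, w N p A = 1 := by
  have h := sum_pow_powerset (Finset.range (N+1)) p (1-p)
  simp only [Finset.card_range, add_sub_cancel, one_pow] at h
  simpa [w, Finset.card_range] using h

lemma w_nonneg {N : ℕ} {p : ℝ} (h0 : 0 ≤ p) (h1 : p ≤ 1) (A : Finset ℕ) : 0 ≤ w N p A :=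
  mul_nonneg (pow_nonneg h0 _) (pow_nonneg (by linarith) _)

lemma sum_w_cond {N : ℕ} (p : ℝ) (B : Finset ℕ) (hB : B ⊆ Finset.range (N+1)) :
    ∑ A ∈ (Finset.range (N+1)).powerset, (if B ⊆ A then w N p A else 0) = p ^ B.card := by
  classical
  rw [Finset.sum_ite, Finset.sum_const_zero, add_zero]
  have key : ∑ A ∈ ((Finset.range (N+1)).powerset.filter fun A => B ⊆ A), w N p A
      = ∑ C ∈ ((Finset.range (N+1)) \ B).powerset, w N p (B ∪ C) := by
    apply Finset.sum_nbij' (i := fun A => A \ B) (j := fun C => B ∪ C)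
    · intro A hA
      simp only [Finset.mem_filter, Finset.mem_powerset] at hA
      exact Finset.mem_powerset.mpr (Finset.sdiff_subset_sdiff hA.1 le_rfl)
    · intro C hC
      simp only [Finset.mem_powerset] at hC
      simp only [Finset.mem_filter, Finset.mem_powerset]
      refine ⟨Finset.union_subset hB (hC.trans (Finset.sdiff_subset)), Finset.subset_union_left⟩
    · intro A hA
      simp only [Finset.mem_filter, Finset.mem_powerset] at hA
      exact Finset.union_sdiff_of_subset hA.2
    · intro C hC
      simp only [Finset.mem_powerset] at hC
      exact Finset.union_sdiff_cancel_left (Finset.disjoint_sdiff.mono_right hC)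
    · intro A hA
      simp only [Finset.mem_filter, Finset.mem_powerset] at hA
      rw [Finset.union_sdiff_of_subset hA.2]
  rw [key]
  have hd : ∀ C ∈ ((Finset.range (N+1)) \ B).powerset, Disjoint B C := by
    intro C hC
    simp only [Finset.mem_powerset] at hC
    exact (Finset.disjoint_sdiff.mono_right hC)
  have card_eq : ((Finset.range (N+1)) \ B).card = N + 1 - B.card := by
    rw [Finset.card_sdiff_of_subset hB, Finset.card_range]
  calc ∑ C ∈ ((Finset.range (N+1)) \ B).powerset, w N p (B ∪ C)
      = ∑ C ∈ ((Finset.range (N+1)) \ B).powerset,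
          p ^ B.card * (p ^ C.card * (1-p) ^ (((Finset.range (N+1)) \ B).card - C.card)) := by
        apply Finset.sum_congr rfl
        intro C hC
        have hdis := hd C hC
        have hCsub := Finset.mem_powerset.mp hC
        have hCB : C.card ≤ N + 1 - B.card := card_eq ▸ Finset.card_le_card hCsub
        rw [w, Finset.card_union_of_disjoint hdis, pow_add, card_eq]
        ring_nf
        rw [Nat.sub_add_eq]
    _ = p ^ B.card := by
        rw [← Finset.mul_sum, sum_pow_powerset, add_sub_cancel, one_pow, mul_one]


variable {N : ℕ} {p : ℝ}

open Classical in
lemma prob_nonneg (h0 : 0 ≤ p) (h1 : p ≤ 1) (E : Finset ℕ → Prop) :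
    0 ≤ binomialProb N p E := by
  rw [binomialProb_eq]
  exact Finset.sum_nonneg fun A _ => by
    by_cases h : E A <;> simp [h, w_nonneg h0 h1 A]

open Classical in
lemma prob_mono (h0 : 0 ≤ p) (h1 : p ≤ 1) {E F : Finset ℕ → Prop}
    (hEF : ∀ A ∈ (Finset.range (N+1)).powerset, E A → F A) :
    binomialProb N p E ≤ binomialProb N p F := by
  rw [binomialProb_eq, binomialProb_eq]
  apply Finset.sum_le_sum
  intro A hA
  by_cases h : E A
  · simp [h, hEF A hA h]
  · by_cases h' : F A <;> simp [h, h', w_nonneg h0 h1 A]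

open Classical in
lemma prob_compl (E : Finset ℕ → Prop) :
    binomialProb N p E + binomialProb N p (fun A => ¬ E A) = 1 := by
  rw [binomialProb_eq, binomialProb_eq, ← Finset.sum_add_distrib, ← sum_w N p]
  apply Finset.sum_congr rfl
  intro A _
  by_cases h : E A <;> simp [h]

open Classical in
lemma prob_union (h0 : 0 ≤ p) (h1 : p ≤ 1) (E F : Finset ℕ → Prop) :
    binomialProb N p (fun A => E A ∨ F A) ≤ binomialProb N p E + binomialProb N p F := by
  simp only [binomialProb_eq, ← Finset.sum_add_distrib]
  apply Finset.sum_le_sum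
  intro A hA
  by_cases h : E A <;> by_cases h' : F A <;>
    simp [h, h', w_nonneg h0 h1 A]

lemma prob_le_one (h0 : 0 ≤ p) (h1 : p ≤ 1) (E : Finset ℕ → Prop) :
    binomialProb N p E ≤ 1 := by
  have := prob_compl (N := N) (p := p) E
  have h2 := prob_nonneg (N := N) h0 h1 (fun A => ¬ E A)
  linarith

open Classical in
lemma markov (h0 : 0 ≤ p) (h1 : p ≤ 1) (f : Finset ℕ → ℝ) (hf : ∀ A, 0 ≤ f A)
    {t : ℝ} (ht : 0 < t) :
    binomialProb N p (fun A => t < f A)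
      ≤ (∑ A ∈ (Finset.range (N+1)).powerset, w N p A * f A) / t := by
  rw [binomialProb_eq, le_div_iff₀ ht, Finset.sum_mul]
  apply Finset.sum_le_sum
  intro A _
  by_cases h : t < f A
  · simp only [h, if_true]
    exact mul_le_mul_of_nonneg_left h.le (w_nonneg h0 h1 A)
  · simp only [h, if_false, zero_mul]
    exact mul_nonneg (w_nonneg h0 h1 A) (hf A)

open Classical in
lemma ex_indicator_sum {ι : Type*} (T : Finset ι) (B : ι → Finset ℕ)
    (hB : ∀ t ∈ T, B t ⊆ Finset.range (N+1)) :
    ∑ A ∈ (Finset.range (N+1)).powerset,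
        w N p A * (∑ t ∈ T, if B t ⊆ A then (1:ℝ) else 0)
      = ∑ t ∈ T, p ^ (B t).card := by
  simp_rw [Finset.mul_sum, mul_ite, mul_one, mul_zero]
  rw [Finset.sum_comm]
  apply Finset.sum_congr rfl
  intro t ht
  exact sum_w_cond p (B t) (hB t ht)

open Classical in
lemma card_eq_ind (A : Finset ℕ) (hA : A ∈ (Finset.range (N+1)).powerset) :
    (A.card : ℝ) = ∑ i ∈ Finset.range (N+1), if {i} ⊆ A then (1:ℝ) else 0 := by
  simp only [Finset.singleton_subset_iff]
  rw [Finset.sum_ite_mem, Finset.inter_eq_right.mpr (Finset.mem_powerset.mp hA)]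
  simp

open Classical in
lemma ex_sq_card (h0 : 0 ≤ p) (h1 : p ≤ 1) :
    ∑ A ∈ (Finset.range (N+1)).powerset,
      w N p A * ((A.card : ℝ) - (N+1)*p)^2 ≤ (N+1)*p := by
  classical
  set S := (Finset.range (N+1)).powerset
  set K : ℝ := (N+1)*p with hK
  -- first moment
  have h1m : ∑ A ∈ S, w N p A * (A.card : ℝ) = (N+1)*p := by
    have key := ex_indicator_sum (N := N) (p := p) (Finset.range (N+1)) (fun i => {i})
      (fun i hi => Finset.singleton_subset_iff.mpr hi)
    have rhs : ∑ t ∈ Finset.range (N+1), p ^ (({t} : Finset ℕ)).card = (N+1)*p := by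
      simp [Finset.sum_const, Finset.card_range]
    rw [show ∑ A ∈ S, w N p A * (A.card : ℝ)
        = ∑ A ∈ (Finset.range (N+1)).powerset,
            w N p A * (∑ t ∈ Finset.range (N+1), if ({t} : Finset ℕ) ⊆ A then (1:ℝ) else 0)
      from Finset.sum_congr rfl fun A hA => by rw [card_eq_ind A hA], key]
    simpa using rhs
  -- second moment
  have h2m : ∑ A ∈ S, w N p A * (A.card : ℝ)^2 = (N+1)*(p + N*p^2) := by
    have key := ex_indicator_sum (N := N) (p := p)
      ((Finset.range (N+1)) ×ˢ (Finset.range (N+1))) (fun q => {q.1} ∪ {q.2})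
      (fun q hq => by
        rcases Finset.mem_product.mp hq with ⟨hq1, hq2⟩
        exact Finset.union_subset (Finset.singleton_subset_iff.mpr hq1)
          (Finset.singleton_subset_iff.mpr hq2))
    have lhs_eq : ∀ A ∈ S, ((A.card : ℝ))^2
        = ∑ q ∈ (Finset.range (N+1)) ×ˢ (Finset.range (N+1)),
            if {q.1} ∪ {q.2} ⊆ A then (1:ℝ) else 0 := by
      intro A hA
      rw [pow_two, card_eq_ind A hA, Finset.sum_mul_sum, Finset.sum_product]
      apply Finset.sum_congr rfl; intro i _
      apply Finset.sum_congr rfl; intro j _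
      by_cases hi : ({i} : Finset ℕ) ⊆ A <;> by_cases hj : ({j} : Finset ℕ) ⊆ A <;>
        (simp only [Finset.union_subset_iff]; simp [hi, hj])
    have rhs_eq : ∑ q ∈ (Finset.range (N+1)) ×ˢ (Finset.range (N+1)),
        p ^ ({q.1} ∪ {q.2} : Finset ℕ).card = (N+1)*(p + N*p^2) := by
      rw [Finset.sum_product]
      have inner : ∀ i ∈ Finset.range (N+1),
          ∑ j ∈ Finset.range (N+1), p ^ ({i} ∪ {j} : Finset ℕ).card = p + N*p^2 := by
        intro i hi
        have : ∀ j, p ^ ({i} ∪ {j} : Finset ℕ).card = if j = i then p else p^2 := by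
          intro j
          by_cases hji : j = i
          · subst hji; simp
          · rw [if_neg hji]
            rw [Finset.card_union_of_disjoint (Finset.disjoint_singleton.mpr (Ne.symm hji))]
            simp
        simp_rw [this]
        have split : ∀ x : ℕ, (if x = i then p else p^2)
            = p^2 + (if x = i then p - p^2 else 0) := by
          intro x; by_cases hx : x = i <;> simp [hx]
        simp_rw [split]
        rw [Finset.sum_add_distrib, Finset.sum_const, Finset.card_range,
          Finset.sum_ite_eq' (Finset.range (N+1)) i (fun _ => p - p^2), if_pos hi]
        ring
      rw [Finset.sum_congr rfl inner, Finset.sum_const, Finset.card_range]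
      ring
    calc ∑ A ∈ S, w N p A * (A.card : ℝ)^2
        = ∑ A ∈ S, w N p A * ∑ q ∈ (Finset.range (N+1)) ×ˢ (Finset.range (N+1)),
            (if {q.1} ∪ {q.2} ⊆ A then (1:ℝ) else 0) := by
          apply Finset.sum_congr rfl; intro A hA; rw [lhs_eq A hA]
      _ = (N+1)*(p + N*p^2) := by rw [key, rhs_eq]
  have h0m : ∑ A ∈ S, w N p A = 1 := sum_w N p
  have expand : ∀ A, w N p A * ((A.card : ℝ) - K)^2
      = w N p A * (A.card : ℝ)^2 - 2*K*(w N p A * (A.card:ℝ)) + K^2 * w N p A := by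
    intro A; ring
  rw [Finset.sum_congr rfl (fun A _ => expand A)]
  rw [Finset.sum_add_distrib, Finset.sum_sub_distrib, ← Finset.mul_sum, ← Finset.mul_sum]
  rw [h1m, h2m, h0m, hK]
  nlinarith [mul_nonneg (add_nonneg (Nat.cast_nonneg N) zero_le_one) (sq_nonneg p)]


variable {s d : ℕ}

/-- signed value of a tuple -/
def nval (s d : ℕ) (f : Fin (s+d) → ℕ) : ℤ :=
  ∑ i : Fin (s+d), if (i : ℕ) < s then (f i : ℤ) else -(f i : ℤ)

/-- multiset of "positive part" entries -/
def Pm (s d : ℕ) (f : Fin (s+d) → ℕ) : Multiset ℕ :=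
  (Finset.univ : Finset (Fin s)).val.map fun i => f (Fin.castAdd d i)

/-- multiset of "negative part" entries -/
def Nm (s d : ℕ) (f : Fin (s+d) → ℕ) : Multiset ℕ :=
  (Finset.univ : Finset (Fin d)).val.map fun i => f (Fin.natAdd s i)

def sameParts (s d : ℕ) (f g : Fin (s+d) → ℕ) : Prop :=
  Pm s d f = Pm s d g ∧ Nm s d f = Nm s d g

lemma sameParts_refl (f : Fin (s+d) → ℕ) : sameParts s d f f := ⟨rfl, rfl⟩
lemma sameParts_symm {f g : Fin (s+d) → ℕ} (h : sameParts s d f g) : sameParts s d g f :=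
  ⟨h.1.symm, h.2.symm⟩
lemma sameParts_trans {f g k : Fin (s+d) → ℕ} (h : sameParts s d f g)
    (h' : sameParts s d g k) : sameParts s d f k := ⟨h.1.trans h'.1, h.2.trans h'.2⟩

lemma card_Pm (f : Fin (s+d) → ℕ) : Multiset.card (Pm s d f) = s := by
  simp [Pm]
lemma card_Nm (f : Fin (s+d) → ℕ) : Multiset.card (Nm s d f) = d := by
  simp [Nm]

/-- the combined multiset of all entries -/
lemma Pm_add_Nm (f : Fin (s+d) → ℕ) :
    Pm s d f + Nm s d f = (Finset.univ : Finset (Fin (s+d))).val.map f := by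
  classical
  have base : ((Finset.univ : Finset (Fin s)).val.map (Fin.castAdd d))
      + ((Finset.univ : Finset (Fin d)).val.map (Fin.natAdd s))
      = (Finset.univ : Finset (Fin (s+d))).val := by
    apply Multiset.eq_of_le_of_card_le
    · rw [Multiset.le_iff_count]
      intro a
      have hnd : (((Finset.univ : Finset (Fin s)).val.map (Fin.castAdd d))
          + ((Finset.univ : Finset (Fin d)).val.map (Fin.natAdd s))).Nodup := by
        rw [Multiset.nodup_add]
        refine ⟨Multiset.Nodup.map (fun a b hab => by simpa [Fin.ext_iff] using hab) (Finset.univ.nodup),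
          Multiset.Nodup.map (fun a b hab => by simpa [Fin.ext_iff] using hab) (Finset.univ.nodup), ?_⟩
        rw [Multiset.disjoint_left]
        intro x hx hy
        simp only [Multiset.mem_map, Finset.mem_val, Finset.mem_univ, true_and] at hx hy
        obtain ⟨i, hi⟩ := hx
        obtain ⟨j, hj⟩ := hy
        have : (x : ℕ) < s := hi ▸ by simp [Fin.coe_castAdd, i.isLt]
        have : ¬ (x : ℕ) < s := hj ▸ by simp [Fin.coe_natAdd]
        omega
      have h1 := (Multiset.nodup_iff_count_le_one.mp hnd) a
      have h2 : Multiset.count a (Finset.univ : Finset (Fin (s+d))).val = 1 := by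
        rw [Multiset.count_eq_one_of_mem (Finset.univ.nodup) (Finset.mem_univ a)]
      omega
    · simp
  calc Pm s d f + Nm s d f
      = (((Finset.univ : Finset (Fin s)).val.map (Fin.castAdd d))
          + ((Finset.univ : Finset (Fin d)).val.map (Fin.natAdd s))).map f := by
        rw [Multiset.map_add, Multiset.map_map, Multiset.map_map]; rfl
    _ = _ := by rw [base]

lemma injective_iff_nodup {n : ℕ} (f : Fin n → ℕ) :
    Function.Injective f ↔ ((Finset.univ : Finset (Fin n)).val.map f).Nodup := by
  constructor
  · intro h; exact Multiset.Nodup.map h (Finset.univ.nodup)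
  · intro h
    have : ((Finset.univ : Finset (Fin n)).image f).card
        = (Finset.univ : Finset (Fin n)).card := by
      show (Multiset.map f Finset.univ.val).toFinset.card = _
      rw [Multiset.toFinset_card_of_nodup h]
      simp
    have := Finset.card_image_iff.mp this
    intro a b hab
    exact this (Finset.mem_coe.mpr (Finset.mem_univ a)) (Finset.mem_coe.mpr (Finset.mem_univ b)) hab

lemma sameParts_injective {f g : Fin (s+d) → ℕ} (hf : Function.Injective f)
    (h : sameParts s d f g) : Function.Injective g := by
  rw [injective_iff_nodup] at hf ⊢
  rw [← Pm_add_Nm] at hf ⊢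
  rw [← h.1, ← h.2]; exact hf

lemma sameParts_nval {f g : Fin (s+d) → ℕ} (h : sameParts s d f g) :
    nval s d f = nval s d g := by
  have key : ∀ k : Fin (s+d) → ℕ, nval s d k
      = ((Pm s d k).map fun n : ℕ => (n:ℤ)).sum - ((Nm s d k).map fun n : ℕ => (n:ℤ)).sum := by
    intro k
    rw [nval, Fin.sum_univ_add]
    have h1 : ∀ i : Fin s, (if ((Fin.castAdd d i : Fin (s+d)) : ℕ) < s
        then (k (Fin.castAdd d i) : ℤ) else -(k (Fin.castAdd d i) : ℤ)) = (k (Fin.castAdd d i) : ℤ) := by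
      intro i; rw [if_pos]; simp [Fin.coe_castAdd, i.isLt]
    have h2 : ∀ i : Fin d, (if ((Fin.natAdd s i : Fin (s+d)) : ℕ) < s
        then (k (Fin.natAdd s i) : ℤ) else -(k (Fin.natAdd s i) : ℤ)) = -(k (Fin.natAdd s i) : ℤ) := by
      intro i; rw [if_neg]; simp [Fin.coe_natAdd]
    rw [Finset.sum_congr rfl fun i _ => h1 i, Finset.sum_congr rfl fun i _ => h2 i]
    rw [Finset.sum_neg_distrib]
    congr 1
    · rw [Pm, Multiset.map_map, Finset.sum]; rfl
    · congr 1; rw [Nm, Multiset.map_map, Finset.sum]; rfl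
  rw [key f, key g, h.1, h.2]

lemma sameParts_mem {A : Finset ℕ} {f g : Fin (s+d) → ℕ}
    (hf : f ∈ Fintype.piFinset fun _ : Fin (s+d) => A) (h : sameParts s d f g) :
    g ∈ Fintype.piFinset fun _ : Fin (s+d) => A := by
  rw [Fintype.mem_piFinset] at hf ⊢
  intro i
  have : g i ∈ (Finset.univ : Finset (Fin (s+d))).val.map g :=
    Multiset.mem_map_of_mem g (Finset.mem_univ i)
  rw [← Pm_add_Nm, ← h.1, ← h.2, Pm_add_Nm] at this
  obtain ⟨j, _, hj⟩ := Multiset.mem_map.mp this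
  exact hj ▸ hf j

lemma nodup_eq_of_toFinset {M₁ M₂ : Multiset ℕ} (h₁ : M₁.Nodup) (h₂ : M₂.Nodup)
    (h : M₁.toFinset = M₂.toFinset) : M₁ = M₂ := by
  classical
  ext y
  by_cases hy : y ∈ M₁
  · have hy2 : y ∈ M₂ := by
      rw [← Multiset.mem_toFinset, ← h, Multiset.mem_toFinset]; exact hy
    rw [Multiset.count_eq_one_of_mem h₁ hy, Multiset.count_eq_one_of_mem h₂ hy2]
  · have hy2 : y ∉ M₂ := by
      rw [← Multiset.mem_toFinset, ← h, Multiset.mem_toFinset]; exact hy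
    rw [Multiset.count_eq_zero_of_notMem hy, Multiset.count_eq_zero_of_notMem hy2]

open Classical in
lemma card_tuples_eq_factorial {n : ℕ} (A : Finset ℕ) (M : Multiset ℕ) (hM : M.Nodup)
    (hcard : Multiset.card M = n) (hMA : ∀ y ∈ M, y ∈ A) :
    ((Fintype.piFinset fun _ : Fin n => A).filter
      (fun u => Multiset.map u Finset.univ.val = M)).card = n.factorial := by
  classical
  set B := M.toFinset with hB
  have hBcard : B.card = n := by rw [hB, Multiset.toFinset_card_of_nodup hM, hcard]
  have htarget : (Finset.univ : Finset (Fin n ↪ ↥B)).card = n.factorial := by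
    rw [Finset.card_univ, Fintype.card_embedding_eq, Fintype.card_fin, Fintype.card_coe, hBcard,
      Nat.descFactorial_self]
  rw [← htarget]
  refine Finset.card_bij'
    (fun u hu => (⟨fun i => (⟨u i, ?_⟩ : ↥B), ?_⟩ : Fin n ↪ ↥B))
    (fun e _ => fun i => (e i : ℕ)) (fun _ _ => Finset.mem_univ _) ?_ ?_ ?_
  · -- u i ∈ B
    have hu2 := (Finset.mem_filter.mp hu).2
    have : u i ∈ Multiset.map u Finset.univ.val :=
      Multiset.mem_map_of_mem u (Finset.mem_univ i)
    rw [hu2] at this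
    exact Multiset.mem_toFinset.mpr this
  · -- injectivity
    have hu2 := (Finset.mem_filter.mp hu).2
    have hnd : (Multiset.map u Finset.univ.val).Nodup := hu2 ▸ hM
    have hinj := (injective_iff_nodup u).mpr hnd
    intro a b hab
    exact hinj (congrArg Subtype.val hab)
  · -- backward maps into filter
    intro e _
    rw [Finset.mem_filter]
    have hinj : Function.Injective (fun i => ((e i : ℕ))) := fun a b hab =>
      e.injective (Subtype.ext hab)
    have hnd : (Multiset.map (fun i => ((e i : ℕ))) Finset.univ.val).Nodup :=
      (injective_iff_nodup _).mp hinj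
    have himg : (Finset.univ.image (fun i => ((e i : ℕ)))) = B := by
      apply Finset.eq_of_subset_of_card_le
      · intro y hy
        obtain ⟨i, _, rfl⟩ := Finset.mem_image.mp hy
        exact (e i).2
      · rw [hBcard, Finset.card_image_of_injective _ hinj, Finset.card_univ, Fintype.card_fin]
    have hmul : Multiset.map (fun i => ((e i : ℕ))) Finset.univ.val = M := by
      apply nodup_eq_of_toFinset hnd hM
      rw [Multiset.toFinset_map]
      simpa using himg
    constructor
    · rw [Fintype.mem_piFinset]
      intro i
      exact hMA _ (by rw [← hmul]; exact Multiset.mem_map_of_mem _ (Finset.mem_univ i))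
    · exact hmul
  · intro u _; rfl
  · intro e _
    apply Function.Embedding.ext
    intro i
    exact Subtype.ext rfl

open Classical in
lemma card_sameParts (A : Finset ℕ) (f : Fin (s+d) → ℕ)
    (hf : f ∈ Fintype.piFinset fun _ : Fin (s+d) => A) (hinj : Function.Injective f) :
    ((Fintype.piFinset fun _ : Fin (s+d) => A).filter (fun g => sameParts s d f g)).card
      = s.factorial * d.factorial := by
  classical
  have hndall : (Pm s d f + Nm s d f).Nodup := by
    rw [Pm_add_Nm]; exact (injective_iff_nodup f).mp hinj
  rw [Multiset.nodup_add] at hndall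
  have hPnd : (Pm s d f).Nodup := hndall.1
  have hNnd : (Nm s d f).Nodup := hndall.2.1
  have hfA : ∀ i, f i ∈ A := Fintype.mem_piFinset.mp hf
  set E₁ := ((Fintype.piFinset fun _ : Fin s => A).filter
      (fun u => Multiset.map u Finset.univ.val = Pm s d f)) with hE₁
  set E₂ := ((Fintype.piFinset fun _ : Fin d => A).filter
      (fun v => Multiset.map v Finset.univ.val = Nm s d f)) with hE₂
  have key : ((Fintype.piFinset fun _ : Fin (s+d) => A).filter
      (fun g => sameParts s d f g)).card = (E₁ ×ˢ E₂).card := by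
    refine Finset.card_nbij' (i := fun g => (fun i => g (Fin.castAdd d i), fun i => g (Fin.natAdd s i)))
      (j := fun uv => Fin.append uv.1 uv.2) ?_ ?_ ?_ ?_
    · intro g hg
      rw [Finset.mem_coe, Finset.mem_filter] at hg
      obtain ⟨hgT, hgP⟩ := hg
      have hgA := Fintype.mem_piFinset.mp hgT
      rw [Finset.mem_coe, Finset.mem_product]
      constructor
      · rw [hE₁, Finset.mem_filter]
        refine ⟨Fintype.mem_piFinset.mpr fun i => hgA _, ?_⟩
        dsimp only
        rw [hgP.1]; rfl
      · rw [hE₂, Finset.mem_filter]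
        refine ⟨Fintype.mem_piFinset.mpr fun i => hgA _, ?_⟩
        dsimp only
        rw [hgP.2]; rfl
    · intro uv huv
      rw [Finset.mem_coe, Finset.mem_product, hE₁, hE₂, Finset.mem_filter, Finset.mem_filter] at huv
      obtain ⟨⟨hu1, hu2⟩, hv1, hv2⟩ := huv
      have hu1' := Fintype.mem_piFinset.mp hu1
      have hv1' := Fintype.mem_piFinset.mp hv1
      rw [Finset.mem_coe, Finset.mem_filter]
      constructor
      · rw [Fintype.mem_piFinset]
        intro i
        refine Fin.addCases (fun i => ?_) (fun i => ?_) i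
        · dsimp only; rw [Fin.append_left]; exact hu1' i
        · dsimp only; rw [Fin.append_right]; exact hv1' i
      · constructor
        · rw [← hu2]
          dsimp only [Pm]
          congr 1
          funext i
          exact (Fin.append_left _ _ i).symm
        · rw [← hv2]
          dsimp only [Nm]
          congr 1
          funext i
          exact (Fin.append_right _ _ i).symm
    · intro g _
      funext i
      refine Fin.addCases (fun i => ?_) (fun i => ?_) i
      · dsimp only; rw [Fin.append_left]
      · dsimp only; rw [Fin.append_right]
    · intro uv _
      refine Prod.ext ?_ ?_
      · funext i; exact Fin.append_left _ _ i
      · funext i; exact Fin.append_right _ _ i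
  rw [key, Finset.card_product]
  rw [hE₁, card_tuples_eq_factorial A (Pm s d f) hPnd (card_Pm f)
    (fun y hy => by obtain ⟨i, _, rfl⟩ := Multiset.mem_map.mp hy; exact hfA _)]
  rw [hE₂, card_tuples_eq_factorial A (Nm s d f) hNnd (card_Nm f)
    (fun y hy => by obtain ⟨i, _, rfl⟩ := Multiset.mem_map.mp hy; exact hfA _)]

open Classical in
noncomputable def badPairs (s d : ℕ) (A : Finset ℕ) :
    Finset ((Fin (s+d) → ℕ) × (Fin (s+d) → ℕ)) :=
  ((Fintype.piFinset fun _ : Fin (s+d) => A) ×ˢ (Fintype.piFinset fun _ : Fin (s+d) => A)).filter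
    fun fg => Function.Injective fg.1 ∧ nval s d fg.1 = nval s d fg.2 ∧
      ¬ sameParts s d fg.1 fg.2

open Classical in
lemma card_pair_eq (A : Finset ℕ) (i j : Fin (s+d)) (hij : i ≠ j) :
    ((Fintype.piFinset fun _ : Fin (s+d) => A).filter fun f => f i = f j).card
      ≤ A.card ^ (s+d-1) := by
  classical
  have htar : (Fintype.piFinset fun l : Fin (s+d) => if l = j then ({0} : Finset ℕ) else A).card
      = A.card ^ (s+d-1) := by
    rw [Fintype.card_piFinset]
    rw [← Finset.mul_prod_erase Finset.univ _ (Finset.mem_univ j)]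
    rw [if_pos rfl, Finset.card_singleton, one_mul]
    rw [Finset.prod_congr rfl (fun l hl => by rw [if_neg (Finset.ne_of_mem_erase hl)])]
    rw [Finset.prod_const, Finset.card_erase_of_mem (Finset.mem_univ j), Finset.card_univ,
      Fintype.card_fin]
  rw [← htar]
  apply Finset.card_le_card_of_injOn (fun f => Function.update f j 0)
  · intro f hf
    rw [Finset.mem_coe, Finset.mem_filter] at hf
    rw [Finset.mem_coe, Fintype.mem_piFinset]
    intro l
    by_cases hl : l = j
    · subst hl; simp
    · beta_reduce; rw [Function.update_of_ne hl, if_neg hl]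
      exact Fintype.mem_piFinset.mp hf.1 l
  · intro f hf g hg hfg
    simp only [Finset.coe_filter, Set.mem_setOf_eq] at hf hg
    have hne : ∀ l, l ≠ j → f l = g l := by
      intro l hl
      have := congrFun hfg l
      dsimp only at this
      rwa [Function.update_of_ne hl, Function.update_of_ne hl] at this
    funext l
    by_cases hl : l = j
    · subst hl
      rw [← hf.2, ← hg.2]
      exact hne i hij
    · exact hne l hl

open Classical in
lemma card_noninj (A : Finset ℕ) :
    ((Fintype.piFinset fun _ : Fin (s+d) => A).filter fun f => ¬ Function.Injective f).card
      ≤ (s+d)*(s+d)*A.card^(s+d-1) := by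
  classical
  set P := (Finset.univ : Finset (Fin (s+d) × Fin (s+d))).filter (fun q => q.1 ≠ q.2) with hP
  set F : Fin (s+d) × Fin (s+d) → Finset (Fin (s+d) → ℕ) :=
    fun q => (Fintype.piFinset fun _ : Fin (s+d) => A).filter (fun f => f q.1 = f q.2) with hF
  have hsub : ((Fintype.piFinset fun _ : Fin (s+d) => A).filter fun f => ¬ Function.Injective f)
      ⊆ P.biUnion F := by
    intro f hf
    rw [Finset.mem_filter] at hf
    obtain ⟨hfT, hfn⟩ := hf
    rw [Function.not_injective_iff] at hfn
    obtain ⟨a, b, hab, hne⟩ := hfn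
    rw [Finset.mem_biUnion]
    refine ⟨(a, b), ?_, ?_⟩
    · rw [hP, Finset.mem_filter]
      exact ⟨Finset.mem_univ _, hne⟩
    · rw [hF]
      exact Finset.mem_filter.mpr ⟨hfT, hab⟩
  refine le_trans (Finset.card_le_card hsub) (le_trans Finset.card_biUnion_le ?_)
  have hterm : ∀ q ∈ P, (F q).card ≤ A.card ^ (s+d-1) := by
    intro q hq
    rw [hP, Finset.mem_filter] at hq
    exact card_pair_eq A q.1 q.2 hq.2
  refine le_trans (Finset.sum_le_sum hterm) ?_
  rw [Finset.sum_const, smul_eq_mul]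
  apply Nat.mul_le_mul_right
  refine le_trans (Finset.card_filter_le _ _) ?_
  simp

open Classical in
noncomputable def goodT (s d : ℕ) (A : Finset ℕ) : Finset (Fin (s+d) → ℕ) :=
  (Fintype.piFinset fun _ : Fin (s+d) => A).filter fun f => Function.Injective f ∧
    ∀ g ∈ (Fintype.piFinset fun _ : Fin (s+d) => A),
      nval s d g = nval s d f → sameParts s d f g

open Classical in
lemma mem_goodT {A : Finset ℕ} {f : Fin (s+d) → ℕ} :
    f ∈ goodT s d A ↔ f ∈ (Fintype.piFinset fun _ : Fin (s+d) => A) ∧ Function.Injective f ∧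
      ∀ g ∈ (Fintype.piFinset fun _ : Fin (s+d) => A),
        nval s d g = nval s d f → sameParts s d f g := by
  rw [goodT, Finset.mem_filter]

open Classical in
lemma card_goodT (A : Finset ℕ) :
    (goodT s d A).card = s.factorial * d.factorial * ((goodT s d A).image (nval s d)).card := by
  classical
  rw [Finset.card_eq_sum_card_fiberwise (f := nval s d) (t := (goodT s d A).image (nval s d))
    (fun f hf => Finset.mem_image_of_mem _ hf)]
  rw [Finset.sum_congr rfl (fun x hx => show _ = s.factorial * d.factorial from ?_),
    Finset.sum_const, smul_eq_mul, mul_comm]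
  obtain ⟨f, hfG, hfx⟩ := Finset.mem_image.mp hx
  obtain ⟨hfT, hfinj, hfall⟩ := mem_goodT.mp hfG
  have fib_eq : (goodT s d A).filter (fun g => nval s d g = x)
      = (Fintype.piFinset fun _ : Fin (s+d) => A).filter (fun g => sameParts s d f g) := by
    ext g
    rw [Finset.mem_filter, Finset.mem_filter, mem_goodT]
    constructor
    · rintro ⟨⟨hgT, _, _⟩, hgx⟩
      exact ⟨hgT, hfall g hgT (by rw [hgx, hfx])⟩
    · rintro ⟨hgT, hgs⟩
      refine ⟨⟨hgT, sameParts_injective hfinj hgs, ?_⟩, ?_⟩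
      · intro g' hg' hvg'
        refine sameParts_trans (sameParts_symm hgs) (hfall g' hg' ?_)
        rw [hvg', ← sameParts_nval hgs]
      · rw [← sameParts_nval hgs, hfx]
  rw [fib_eq, card_sameParts A f hfT hfinj]

open Classical in
lemma card_bad2 (A : Finset ℕ) :
    ((Fintype.piFinset fun _ : Fin (s+d) => A).filter fun f => Function.Injective f ∧
        ¬ ∀ g ∈ (Fintype.piFinset fun _ : Fin (s+d) => A),
            nval s d g = nval s d f → sameParts s d f g).card ≤ (badPairs s d A).card := by
  classical
  apply Finset.card_le_card_of_injOn (fun f =>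
    if hf : ∃ g ∈ (Fintype.piFinset fun _ : Fin (s+d) => A),
        nval s d g = nval s d f ∧ ¬ sameParts s d f g then (f, hf.choose) else (f, f))
  · intro f hf
    rw [Finset.mem_coe, Finset.mem_filter] at hf
    obtain ⟨hfT, hfinj, hfbad⟩ := hf
    push_neg at hfbad
    obtain ⟨g, hgT, hgv, hgs⟩ := hfbad
    have hex : ∃ g ∈ (Fintype.piFinset fun _ : Fin (s+d) => A),
        nval s d g = nval s d f ∧ ¬ sameParts s d f g := ⟨g, hgT, hgv, hgs⟩
    simp only [Finset.mem_coe]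
    rw [dif_pos hex]
    have hspec := hex.choose_spec
    rw [badPairs, Finset.mem_filter, Finset.mem_product]
    exact ⟨⟨hfT, hspec.1⟩, hfinj, hspec.2.1.symm, hspec.2.2⟩
  · intro f _ g _ hfg
    have key : ∀ f' : Fin (s+d) → ℕ,
        (if hf : ∃ g ∈ (Fintype.piFinset fun _ : Fin (s+d) => A),
            nval s d g = nval s d f' ∧ ¬ sameParts s d f' g
          then (f', hf.choose) else (f', f')).1 = f' := by
      intro f'
      by_cases hP : ∃ g ∈ (Fintype.piFinset fun _ : Fin (s+d) => A),
          nval s d g = nval s d f' ∧ ¬ sameParts s d f' g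
      · rw [dif_pos hP]
      · rw [dif_neg hP]
    have := congrArg Prod.fst hfg
    rwa [key, key] at this

open Classical in
lemma sandwich_lower (A : Finset ℕ) :
    A.card ^ (s+d) ≤ s.factorial * d.factorial
        * (((Fintype.piFinset fun _ : Fin (s+d) => A).image (nval s d)).card)
      + (s+d)*(s+d)*A.card^(s+d-1) + (badPairs s d A).card := by
  classical
  set T := (Fintype.piFinset fun _ : Fin (s+d) => A) with hT
  have hcover : T ⊆ goodT s d A ∪ ((T.filter fun f => ¬ Function.Injective f)
      ∪ (T.filter fun f => Function.Injective f ∧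
          ¬ ∀ g ∈ T, nval s d g = nval s d f → sameParts s d f g)) := by
    intro f hf
    rw [Finset.mem_union, Finset.mem_union]
    by_cases hinj : Function.Injective f
    · by_cases hall : ∀ g ∈ T, nval s d g = nval s d f → sameParts s d f g
      · exact Or.inl (mem_goodT.mpr ⟨hf, hinj, hall⟩)
      · exact Or.inr (Or.inr (Finset.mem_filter.mpr ⟨hf, hinj, hall⟩))
    · exact Or.inr (Or.inl (Finset.mem_filter.mpr ⟨hf, hinj⟩))
  have hTcard : T.card = A.card ^ (s+d) := by
    rw [hT, Fintype.card_piFinset]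
    simp
  calc A.card ^ (s+d) = T.card := hTcard.symm
    _ ≤ (goodT s d A).card + ((T.filter fun f => ¬ Function.Injective f).card
        + (T.filter fun f => Function.Injective f ∧
            ¬ ∀ g ∈ T, nval s d g = nval s d f → sameParts s d f g).card) := by
      refine le_trans (Finset.card_le_card hcover) ?_
      refine le_trans (Finset.card_union_le _ _) ?_
      exact Nat.add_le_add_left (Finset.card_union_le _ _) _
    _ ≤ s.factorial * d.factorial * (((T.image (nval s d)).card))
        + (s+d)*(s+d)*A.card^(s+d-1) + (badPairs s d A).card := by
      have h1 : (goodT s d A).card ≤ s.factorial * d.factorial * ((T.image (nval s d)).card) := by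
        rw [card_goodT]
        apply Nat.mul_le_mul_left
        apply Finset.card_le_card
        apply Finset.image_subset_image
        rw [goodT, hT]
        exact Finset.filter_subset _ _
      have h2 := card_noninj (s := s) (d := d) A
      have h3 := card_bad2 (s := s) (d := d) A
      rw [← hT] at h2 h3
      omega

open Classical in
lemma sandwich_upper (A : Finset ℕ) :
    s.factorial * d.factorial * (((Fintype.piFinset fun _ : Fin (s+d) => A).image (nval s d)).card)
      ≤ A.card ^ (s+d) + s.factorial * d.factorial * ((s+d)*(s+d)*A.card^(s+d-1)) := by
  classical
  set T := (Fintype.piFinset fun _ : Fin (s+d) => A) with hT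
  set Tinj := T.filter (fun f => Function.Injective f) with hTinj
  set Tnon := T.filter (fun f => ¬ Function.Injective f) with hTnon
  have himg : T.image (nval s d) = Tinj.image (nval s d) ∪ Tnon.image (nval s d) := by
    rw [← Finset.image_union, hTinj, hTnon, Finset.filter_union_filter_not_eq]
  have hkey : s.factorial * d.factorial * (Tinj.image (nval s d)).card ≤ Tinj.card := by
    rw [Finset.card_eq_sum_card_fiberwise (f := nval s d) (t := Tinj.image (nval s d))
      (fun f hf => Finset.mem_image_of_mem _ hf)]
    have hbound : ∀ x ∈ Tinj.image (nval s d),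
        s.factorial * d.factorial ≤ (Tinj.filter (fun g => nval s d g = x)).card := by
      intro x hx
      obtain ⟨f, hfI, hfx⟩ := Finset.mem_image.mp hx
      rw [hTinj, Finset.mem_filter] at hfI
      have hsub : (T.filter (fun g => sameParts s d f g)) ⊆ Tinj.filter (fun g => nval s d g = x) := by
        intro g hg
        rw [Finset.mem_filter] at hg
        rw [Finset.mem_filter, hTinj, Finset.mem_filter]
        exact ⟨⟨hg.1, sameParts_injective hfI.2 hg.2⟩, by rw [← sameParts_nval hg.2, hfx]⟩
      calc s.factorial * d.factorial = (T.filter (fun g => sameParts s d f g)).card :=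
            (card_sameParts A f hfI.1 hfI.2).symm
        _ ≤ _ := Finset.card_le_card hsub
    calc s.factorial * d.factorial * (Tinj.image (nval s d)).card
        = (Tinj.image (nval s d)).card • (s.factorial * d.factorial) := by
          rw [smul_eq_mul, mul_comm]
      _ ≤ _ := Finset.card_nsmul_le_sum _ _ _ hbound
  have hTinjcard : Tinj.card ≤ A.card ^ (s+d) := by
    rw [hTinj]
    refine le_trans (Finset.card_le_card (Finset.filter_subset _ _)) ?_
    rw [hT, Fintype.card_piFinset]
    simp
  have hnon := card_noninj (s := s) (d := d) A
  have himgcard : (T.image (nval s d)).card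
      ≤ (Tinj.image (nval s d)).card + Tnon.card := by
    rw [himg]
    refine le_trans (Finset.card_union_le _ _) ?_
    exact Nat.add_le_add_left (Finset.card_image_le) _
  calc s.factorial * d.factorial * ((T.image (nval s d)).card)
      ≤ s.factorial * d.factorial * ((Tinj.image (nval s d)).card + Tnon.card) :=
        Nat.mul_le_mul_left _ himgcard
    _ = s.factorial * d.factorial * (Tinj.image (nval s d)).card
        + s.factorial * d.factorial * Tnon.card := by ring
    _ ≤ A.card ^ (s+d) + s.factorial * d.factorial * ((s+d)*(s+d)*A.card^(s+d-1)) := by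
      have := hkey.trans hTinjcard
      have h2 : Tnon.card ≤ (s+d)*(s+d)*A.card^(s+d-1) := hnon
      have h3 : s.factorial * d.factorial * Tnon.card
          ≤ s.factorial * d.factorial * ((s+d)*(s+d)*A.card^(s+d-1)) :=
        Nat.mul_le_mul_left _ h2
      omega

/-! ### Layer 4: pattern counting -/

def eps (s d : ℕ) : (Fin (s+d) ⊕ Fin (s+d)) → ℤ
  | Sum.inl i => if (i : ℕ) < s then 1 else -1
  | Sum.inr i => if (i : ℕ) < s then -1 else 1

def Fx (x : (Fin (s+d) → ℕ) × (Fin (s+d) → ℕ)) : (Fin (s+d) ⊕ Fin (s+d)) → ℕ :=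
  Sum.elim x.1 x.2

def supp (x : (Fin (s+d) → ℕ) × (Fin (s+d) → ℕ)) : Finset ℕ :=
  Finset.univ.image x.1 ∪ Finset.univ.image x.2

def slist (x : (Fin (s+d) → ℕ) × (Fin (s+d) → ℕ)) : List ℕ :=
  (supp x).sort (· ≤ ·)

def pat (x : (Fin (s+d) → ℕ) × (Fin (s+d) → ℕ)) : (Fin (s+d) ⊕ Fin (s+d)) → ℕ :=
  fun q => (slist x).idxOf (Fx x q)

def vmap (x : (Fin (s+d) → ℕ) × (Fin (s+d) → ℕ)) (b : ℕ) : ℕ :=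
  (slist x).getD b 0

def coefP (s d : ℕ) (σ : (Fin (s+d) ⊕ Fin (s+d)) → ℕ) (b : ℕ) : ℤ :=
  ∑ q : (Fin (s+d) ⊕ Fin (s+d)), if σ q = b then eps s d q else 0

lemma Fx_mem_supp (x : (Fin (s+d) → ℕ) × (Fin (s+d) → ℕ)) (q : Fin (s+d) ⊕ Fin (s+d)) :
    Fx x q ∈ supp x := by
  rcases q with i | i
  · exact Finset.mem_union_left _ (Finset.mem_image_of_mem _ (Finset.mem_univ i))
  · exact Finset.mem_union_right _ (Finset.mem_image_of_mem _ (Finset.mem_univ i))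

lemma mem_supp_iff {x : (Fin (s+d) → ℕ) × (Fin (s+d) → ℕ)} {y : ℕ} :
    y ∈ supp x ↔ ∃ q, Fx x q = y := by
  rw [supp, Finset.mem_union]
  constructor
  · rintro (hy | hy)
    · obtain ⟨i, _, rfl⟩ := Finset.mem_image.mp hy
      exact ⟨Sum.inl i, rfl⟩
    · obtain ⟨i, _, rfl⟩ := Finset.mem_image.mp hy
      exact ⟨Sum.inr i, rfl⟩
  · rintro ⟨q, rfl⟩
    rcases q with i | i
    · exact Or.inl (Finset.mem_image_of_mem _ (Finset.mem_univ i))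
    · exact Or.inr (Finset.mem_image_of_mem _ (Finset.mem_univ i))

lemma vmap_indexOf {x : (Fin (s+d) → ℕ) × (Fin (s+d) → ℕ)} {y : ℕ} (hy : y ∈ supp x) :
    vmap x ((slist x).idxOf y) = y := by
  have hmem : y ∈ slist x := (Finset.mem_sort _).mpr hy
  rw [vmap, List.getD_eq_getElem _ _ (List.idxOf_lt_length_iff.mpr hmem)]
  exact List.getElem_idxOf (List.idxOf_lt_length_iff.mpr hmem)

lemma vmap_pat (x : (Fin (s+d) → ℕ) × (Fin (s+d) → ℕ)) (q : Fin (s+d) ⊕ Fin (s+d)) :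
    vmap x (pat x q) = Fx x q :=
  vmap_indexOf (Fx_mem_supp x q)

lemma card_supp_le (x : (Fin (s+d) → ℕ) × (Fin (s+d) → ℕ)) :
    (supp x).card ≤ 2*(s+d) := by
  refine le_trans (Finset.card_union_le _ _) ?_
  have h1 := Finset.card_image_le (s := (Finset.univ : Finset (Fin (s+d)))) (f := x.1)
  have h2 := Finset.card_image_le (s := (Finset.univ : Finset (Fin (s+d)))) (f := x.2)
  simp only [Finset.card_univ, Fintype.card_fin] at h1 h2
  omega

lemma pat_lt (x : (Fin (s+d) → ℕ) × (Fin (s+d) → ℕ)) (q : Fin (s+d) ⊕ Fin (s+d)) :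
    pat x q < 2*(s+d) := by
  have hmem : Fx x q ∈ slist x := (Finset.mem_sort _).mpr (Fx_mem_supp x q)
  have := List.idxOf_lt_length_iff.mpr hmem
  rw [slist, Finset.length_sort] at this
  exact lt_of_lt_of_le this (card_supp_le x)

lemma indexOf_injOn {x : (Fin (s+d) → ℕ) × (Fin (s+d) → ℕ)} {y y' : ℕ}
    (hy : y ∈ supp x) (hy' : y' ∈ supp x)
    (h : (slist x).idxOf y = (slist x).idxOf y') : y = y' := by
  rw [← vmap_indexOf hy, ← vmap_indexOf hy', h]

lemma nval_eq_sum_eps (f : Fin (s+d) → ℕ) :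
    nval s d f = ∑ i : Fin (s+d), (if (i:ℕ) < s then (1:ℤ) else -1) * (f i : ℤ) := by
  rw [nval]
  apply Finset.sum_congr rfl
  intro i _
  by_cases hi : (i:ℕ) < s <;> simp [hi]

lemma sum_eps_Fx (x : (Fin (s+d) → ℕ) × (Fin (s+d) → ℕ)) :
    ∑ q : (Fin (s+d) ⊕ Fin (s+d)), eps s d q * (Fx x q : ℤ)
      = nval s d x.1 - nval s d x.2 := by
  rw [Fintype.sum_sum_type]
  have h1 : ∑ i : Fin (s+d), eps s d (Sum.inl i) * (Fx x (Sum.inl i) : ℤ) = nval s d x.1 := by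
    rw [nval_eq_sum_eps]
    apply Finset.sum_congr rfl
    intro i _
    rfl
  have h2 : ∑ i : Fin (s+d), eps s d (Sum.inr i) * (Fx x (Sum.inr i) : ℤ) = - nval s d x.2 := by
    rw [nval_eq_sum_eps, ← Finset.sum_neg_distrib]
    apply Finset.sum_congr rfl
    intro i _
    show eps s d (Sum.inr i) * (x.2 i : ℤ) = -((if (i:ℕ) < s then (1:ℤ) else -1) * (x.2 i))
    by_cases hi : (i:ℕ) < s <;> simp [eps, hi]
  rw [h1, h2]
  ring

/-- the linear equation satisfied by the block values -/
lemma sum_coef_vmap (x : (Fin (s+d) → ℕ) × (Fin (s+d) → ℕ))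
    (hval : nval s d x.1 = nval s d x.2) :
    ∑ b ∈ Finset.range (2*(s+d)), coefP s d (pat x) b * (vmap x b : ℤ) = 0 := by
  classical
  have step : ∀ b ∈ Finset.range (2*(s+d)), coefP s d (pat x) b * (vmap x b : ℤ)
      = ∑ q : (Fin (s+d) ⊕ Fin (s+d)), if pat x q = b then eps s d q * (vmap x b : ℤ) else 0 := by
    intro b _
    rw [coefP, Finset.sum_mul]
    apply Finset.sum_congr rfl
    intro q _
    by_cases hq : pat x q = b <;> simp [hq]
  rw [Finset.sum_congr rfl step, Finset.sum_comm]
  have inner : ∀ q : (Fin (s+d) ⊕ Fin (s+d)),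
      ∑ b ∈ Finset.range (2*(s+d)), (if pat x q = b then eps s d q * (vmap x b : ℤ) else 0)
        = eps s d q * (Fx x q : ℤ) := by
    intro q
    rw [Finset.sum_ite_eq (Finset.range (2*(s+d))) (pat x q)
      (fun b => eps s d q * (vmap x b : ℤ))]
    rw [if_pos (Finset.mem_range.mpr (pat_lt x q)), vmap_pat]
  rw [Finset.sum_congr rfl (fun q _ => inner q), sum_eps_Fx, hval, sub_self]

lemma count_Pm (f : Fin (s+d) → ℕ) (y : ℕ) :
    Multiset.count y (Pm s d f) = ∑ i : Fin s, if f (Fin.castAdd d i) = y then 1 else 0 := by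
  classical
  rw [Pm, Multiset.count_map]
  rw [show Multiset.filter (fun a => y = f (Fin.castAdd d a)) (Finset.univ : Finset (Fin s)).val
      = ((Finset.univ : Finset (Fin s)).filter (fun a => y = f (Fin.castAdd d a))).val from rfl]
  rw [show Multiset.card ((Finset.univ : Finset (Fin s)).filter
      (fun a => y = f (Fin.castAdd d a))).val
      = ((Finset.univ : Finset (Fin s)).filter (fun a => y = f (Fin.castAdd d a))).card from rfl]
  rw [Finset.card_filter]
  apply Finset.sum_congr rfl
  intro i _
  by_cases hi : f (Fin.castAdd d i) = y
  · rw [if_pos hi.symm, if_pos hi]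
  · rw [if_neg (fun hy => hi hy.symm), if_neg hi]

lemma count_Nm (f : Fin (s+d) → ℕ) (y : ℕ) :
    Multiset.count y (Nm s d f) = ∑ i : Fin d, if f (Fin.natAdd s i) = y then 1 else 0 := by
  classical
  rw [Nm, Multiset.count_map]
  rw [show Multiset.filter (fun a => y = f (Fin.natAdd s a)) (Finset.univ : Finset (Fin d)).val
      = ((Finset.univ : Finset (Fin d)).filter (fun a => y = f (Fin.natAdd s a))).val from rfl]
  rw [show Multiset.card ((Finset.univ : Finset (Fin d)).filter
      (fun a => y = f (Fin.natAdd s a))).val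
      = ((Finset.univ : Finset (Fin d)).filter (fun a => y = f (Fin.natAdd s a))).card from rfl]
  rw [Finset.card_filter]
  apply Finset.sum_congr rfl
  intro i _
  by_cases hi : f (Fin.natAdd s i) = y
  · rw [if_pos hi.symm, if_pos hi]
  · rw [if_neg (fun hy => hi hy.symm), if_neg hi]

lemma count_sub_eq (f : Fin (s+d) → ℕ) (y : ℕ) :
    (Multiset.count y (Pm s d f) : ℤ) - (Multiset.count y (Nm s d f) : ℤ)
      = ∑ i : Fin (s+d), (if f i = y then (1:ℤ) else 0) * (if (i:ℕ) < s then 1 else -1) := by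
  rw [Fin.sum_univ_add]
  have h1 : ∀ i : Fin s, ((if f (Fin.castAdd d i) = y then (1:ℤ) else 0)
      * (if ((Fin.castAdd d i : Fin (s+d)) : ℕ) < s then 1 else -1))
      = (if f (Fin.castAdd d i) = y then (1:ℤ) else 0) := by
    intro i
    have hc : ((Fin.castAdd d i : Fin (s+d)) : ℕ) < s := by simpa using i.isLt
    rw [if_pos hc]
    ring
  have h2 : ∀ i : Fin d, ((if f (Fin.natAdd s i) = y then (1:ℤ) else 0)
      * (if ((Fin.natAdd s i : Fin (s+d)) : ℕ) < s then 1 else -1))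
      = -(if f (Fin.natAdd s i) = y then (1:ℤ) else 0) := by
    intro i
    have hc : ¬ ((Fin.natAdd s i : Fin (s+d)) : ℕ) < s := by simp
    rw [if_neg hc]
    ring
  rw [Finset.sum_congr rfl (fun i _ => h1 i), Finset.sum_congr rfl (fun i _ => h2 i)]
  rw [Finset.sum_neg_distrib]
  rw [count_Pm, count_Nm]
  push_cast
  ring

/-- The core nondegeneracy fact: if all the signed counts agree, the parts agree. -/
lemma parts_eq_of_counts {f g : Fin (s+d) → ℕ} (hf : Function.Injective f)
    (h : ∀ y : ℕ, (Multiset.count y (Pm s d f) : ℤ) - Multiset.count y (Nm s d f)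
        - Multiset.count y (Pm s d g) + Multiset.count y (Nm s d g) = 0) :
    sameParts s d f g := by
  classical
  have hndall : (Pm s d f + Nm s d f).Nodup := by
    rw [Pm_add_Nm]; exact (injective_iff_nodup f).mp hf
  rw [Multiset.nodup_add] at hndall
  obtain ⟨hPnd, hNnd, hdisj⟩ := hndall
  set Pf := Pm s d f
  set Nf := Nm s d f
  set Pg := Pm s d g
  set Ng := Nm s d g
  set SF := Pf.toFinset with hSF
  set SN := Nf.toFinset with hSN
  set V := SF ∪ SN ∪ Pg.toFinset ∪ Ng.toFinset with hV
  have sum_count : ∀ M : Multiset ℕ, M.toFinset ⊆ V →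
      ∑ y ∈ V, Multiset.count y M = Multiset.card M := by
    intro M hM
    rw [← Multiset.toFinset_sum_count_eq M]
    symm
    apply Finset.sum_subset hM
    intro y _ hy
    exact Multiset.count_eq_zero_of_notMem (fun hmem => hy (Multiset.mem_toFinset.mpr hmem))
  -- counts on SF
  have hSFcnt : ∀ y ∈ SF, Multiset.count y Pf = 1 ∧ Multiset.count y Nf = 0 := by
    intro y hy
    have hyP : y ∈ Pf := Multiset.mem_toFinset.mp hy
    constructor
    · exact Multiset.count_eq_one_of_mem hPnd hyP
    · exact Multiset.count_eq_zero_of_notMem (fun hyN => (Multiset.disjoint_left.mp hdisj) hyP hyN)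
  have hSNcnt : ∀ y ∈ SN, Multiset.count y Nf = 1 ∧ Multiset.count y Pf = 0 := by
    intro y hy
    have hyN : y ∈ Nf := Multiset.mem_toFinset.mp hy
    constructor
    · exact Multiset.count_eq_one_of_mem hNnd hyN
    · exact Multiset.count_eq_zero_of_notMem (fun hyP => (Multiset.disjoint_left.mp hdisj) hyP hyN)
  -- from h: on SF, count Pg = count Ng + 1
  have hPgSF : ∀ y ∈ SF, Multiset.count y Pg = Multiset.count y Ng + 1 := by
    intro y hy
    have := h y
    rw [(hSFcnt y hy).1, (hSFcnt y hy).2] at this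
    push_cast at this
    omega
  have hNgSN : ∀ y ∈ SN, Multiset.count y Ng = Multiset.count y Pg + 1 := by
    intro y hy
    have := h y
    rw [(hSNcnt y hy).1, (hSNcnt y hy).2] at this
    push_cast at this
    omega
  have hoff : ∀ y, y ∉ SF → y ∉ SN → Multiset.count y Pg = Multiset.count y Ng := by
    intro y hy1 hy2
    have := h y
    have e1 : Multiset.count y Pf = 0 :=
      Multiset.count_eq_zero_of_notMem (fun hm => hy1 (Multiset.mem_toFinset.mpr hm))
    have e2 : Multiset.count y Nf = 0 :=
      Multiset.count_eq_zero_of_notMem (fun hm => hy2 (Multiset.mem_toFinset.mpr hm))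
    rw [e1, e2] at this
    push_cast at this
    omega
  have hSFsubV : SF ⊆ V := by
    rw [hV]; intro y hy; exact Finset.mem_union_left _ (Finset.mem_union_left _ (Finset.mem_union_left _ hy))
  have hSNsubV : SN ⊆ V := by
    rw [hV]; intro y hy; exact Finset.mem_union_left _ (Finset.mem_union_left _ (Finset.mem_union_right _ hy))
  have hPgsubV : Pg.toFinset ⊆ V := by
    rw [hV]; intro y hy; exact Finset.mem_union_left _ (Finset.mem_union_right _ hy)
  have hNgsubV : Ng.toFinset ⊆ V := by
    rw [hV]; intro y hy; exact Finset.mem_union_right _ hy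
  have hcardSF : SF.card = s := by
    rw [hSF, Multiset.toFinset_card_of_nodup hPnd, card_Pm]
  have hcardSN : SN.card = d := by
    rw [hSN, Multiset.toFinset_card_of_nodup hNnd, card_Nm]
  -- sum decompositions
  have hsplitP : ∑ y ∈ V, Multiset.count y Pg
      = ∑ y ∈ SF, Multiset.count y Pg + ∑ y ∈ V \ SF, Multiset.count y Pg := by
    rw [add_comm, Finset.sum_sdiff hSFsubV]
  have hsplitN : ∑ y ∈ V, Multiset.count y Ng
      = ∑ y ∈ SN, Multiset.count y Ng + ∑ y ∈ V \ SN, Multiset.count y Ng := by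
    rw [add_comm, Finset.sum_sdiff hSNsubV]
  have hsumPg : ∑ y ∈ V, Multiset.count y Pg = s := by
    rw [sum_count Pg hPgsubV, card_Pm]
  have hsumNg : ∑ y ∈ V, Multiset.count y Ng = d := by
    rw [sum_count Ng hNgsubV, card_Nm]
  have hSFge : ∑ y ∈ SF, Multiset.count y Pg = s + ∑ y ∈ SF, Multiset.count y Ng := by
    rw [Finset.sum_congr rfl hPgSF, Finset.sum_add_distrib, Finset.sum_const, smul_eq_mul,
      mul_one, hcardSF]
    omega
  have hSNge : ∑ y ∈ SN, Multiset.count y Ng = d + ∑ y ∈ SN, Multiset.count y Pg := by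
    rw [Finset.sum_congr rfl hNgSN, Finset.sum_add_distrib, Finset.sum_const, smul_eq_mul,
      mul_one, hcardSN]
    omega
  -- deduce all the zero sums
  have hz1 : ∑ y ∈ SF, Multiset.count y Ng = 0 ∧ ∑ y ∈ V \ SF, Multiset.count y Pg = 0 := by
    omega
  have hz2 : ∑ y ∈ SN, Multiset.count y Pg = 0 ∧ ∑ y ∈ V \ SN, Multiset.count y Ng = 0 := by
    have e := hsplitN
    rw [hsumNg, hSNge] at e
    omega
  have hNgSF : ∀ y ∈ SF, Multiset.count y Ng = 0 :=
    fun y hy => (Finset.sum_eq_zero_iff.mp hz1.1) y hy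
  have hPgVSF : ∀ y ∈ V \ SF, Multiset.count y Pg = 0 :=
    fun y hy => (Finset.sum_eq_zero_iff.mp hz1.2) y hy
  have hPgSN : ∀ y ∈ SN, Multiset.count y Pg = 0 :=
    fun y hy => (Finset.sum_eq_zero_iff.mp hz2.1) y hy
  have hNgVSN : ∀ y ∈ V \ SN, Multiset.count y Ng = 0 :=
    fun y hy => (Finset.sum_eq_zero_iff.mp hz2.2) y hy
  constructor
  · -- Pf = Pg
    apply Multiset.ext.mpr
    intro y
    by_cases hySF : y ∈ SF
    · rw [(hSFcnt y hySF).1, hPgSF y hySF, hNgSF y hySF]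
    · have hPf0 : Multiset.count y Pf = 0 :=
        Multiset.count_eq_zero_of_notMem (fun hm => hySF (Multiset.mem_toFinset.mpr hm))
      rw [hPf0]
      by_cases hyV : y ∈ V
      · rw [hPgVSF y (Finset.mem_sdiff.mpr ⟨hyV, hySF⟩)]
      · rw [Multiset.count_eq_zero_of_notMem
          (fun hm => hyV (hPgsubV (Multiset.mem_toFinset.mpr hm)))]
  · -- Nf = Ng
    apply Multiset.ext.mpr
    intro y
    by_cases hySN : y ∈ SN
    · rw [(hSNcnt y hySN).1, hNgSN y hySN, hPgSN y hySN]
    · have hNf0 : Multiset.count y Nf = 0 :=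
        Multiset.count_eq_zero_of_notMem (fun hm => hySN (Multiset.mem_toFinset.mpr hm))
      rw [hNf0]
      by_cases hyV : y ∈ V
      · rw [hNgVSN y (Finset.mem_sdiff.mpr ⟨hyV, hySN⟩)]
      · rw [Multiset.count_eq_zero_of_notMem
          (fun hm => hyV (hNgsubV (Multiset.mem_toFinset.mpr hm)))]

open Classical in
lemma exists_coef_ne (x : (Fin (s+d) → ℕ) × (Fin (s+d) → ℕ))
    (hinj : Function.Injective x.1) (hval : nval s d x.1 = nval s d x.2)
    (hns : ¬ sameParts s d x.1 x.2) :
    ∃ b ∈ Finset.range (2*(s+d)), coefP s d (pat x) b ≠ 0 := by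
  by_contra hcon
  push_neg at hcon
  apply hns
  apply parts_eq_of_counts hinj
  intro y
  have key : ∑ q : (Fin (s+d) ⊕ Fin (s+d)), (if Fx x q = y then eps s d q else 0) = 0 := by
    by_cases hy : y ∈ supp x
    · have hmem : y ∈ slist x := (Finset.mem_sort _).mpr hy
      have hidx : (slist x).idxOf y ∈ Finset.range (2*(s+d)) := by
        rw [Finset.mem_range]
        have hlt := List.idxOf_lt_length_iff.mpr hmem
        rw [slist, Finset.length_sort] at hlt
        exact lt_of_lt_of_le hlt (card_supp_le x)
      have hzero := hcon _ hidx
      have hcongr : (∑ q : (Fin (s+d) ⊕ Fin (s+d)), if Fx x q = y then eps s d q else 0)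
          = ∑ q : (Fin (s+d) ⊕ Fin (s+d)),
              if pat x q = (slist x).idxOf y then eps s d q else 0 := by
        apply Finset.sum_congr rfl
        intro q _
        have hiff : (Fx x q = y) ↔ (pat x q = (slist x).idxOf y) := by
          constructor
          · intro h; rw [pat, h]
          · intro h
            have h1 := vmap_pat x q
            rw [h, vmap_indexOf hy] at h1
            exact h1.symm
        by_cases hq : Fx x q = y
        · rw [if_pos hq, if_pos (hiff.mp hq)]
        · rw [if_neg hq, if_neg (fun hh => hq (hiff.mpr hh))]
      rw [hcongr]
      exact hzero
    · apply Finset.sum_eq_zero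
      intro q _
      exact if_neg (fun h : Fx x q = y => hy (h ▸ Fx_mem_supp x q))
  have expand : ∑ q : (Fin (s+d) ⊕ Fin (s+d)), (if Fx x q = y then eps s d q else 0)
      = ((Multiset.count y (Pm s d x.1) : ℤ) - Multiset.count y (Nm s d x.1))
        - ((Multiset.count y (Pm s d x.2) : ℤ) - Multiset.count y (Nm s d x.2)) := by
    rw [Fintype.sum_sum_type]
    have e1 : ∀ i : Fin (s+d), (if Fx x (Sum.inl i) = y then eps s d (Sum.inl i) else 0)
        = (if x.1 i = y then (1:ℤ) else 0) * (if (i:ℕ) < s then 1 else -1) := by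
      intro i
      by_cases hq : x.1 i = y <;> by_cases hi : (i:ℕ) < s <;> simp [Fx, eps, hq, hi]
    have e2 : ∀ i : Fin (s+d), (if Fx x (Sum.inr i) = y then eps s d (Sum.inr i) else 0)
        = -((if x.2 i = y then (1:ℤ) else 0) * (if (i:ℕ) < s then 1 else -1)) := by
      intro i
      by_cases hq : x.2 i = y <;> by_cases hi : (i:ℕ) < s <;> simp [Fx, eps, hq, hi]
    rw [Finset.sum_congr rfl (fun i _ => e1 i), Finset.sum_congr rfl (fun i _ => e2 i),
      Finset.sum_neg_distrib, ← count_sub_eq, ← count_sub_eq]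
    ring
  rw [expand] at key
  linarith [key]

open Classical in
lemma card_supp_eq_pat (x : (Fin (s+d) → ℕ) × (Fin (s+d) → ℕ)) :
    (supp x).card = (Finset.univ.image (pat x)).card := by
  apply Finset.card_nbij (i := fun y => (slist x).idxOf y)
  · intro y hy
    obtain ⟨q, rfl⟩ := mem_supp_iff.mp hy
    exact Finset.mem_image.mpr ⟨q, Finset.mem_univ q, rfl⟩
  · intro y hy y' hy' h
    exact indexOf_injOn (by simpa using hy) (by simpa using hy') h
  · intro b hb
    simp only [Finset.coe_image, Set.mem_image, Finset.mem_coe] at hb ⊢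
    obtain ⟨q, _, rfl⟩ := hb
    exact ⟨Fx x q, Fx_mem_supp x q, rfl⟩

lemma supp_subset {N : ℕ} {x : (Fin (s+d) → ℕ) × (Fin (s+d) → ℕ)}
    (hx : x ∈ (Fintype.piFinset fun _ : Fin (s+d) => Finset.range (N+1)) ×ˢ
      (Fintype.piFinset fun _ : Fin (s+d) => Finset.range (N+1))) :
    supp x ⊆ Finset.range (N+1) := by
  rw [Finset.mem_product] at hx
  intro y hy
  obtain ⟨q, rfl⟩ := mem_supp_iff.mp hy
  rcases q with i | i
  · exact Fintype.mem_piFinset.mp hx.1 i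
  · exact Fintype.mem_piFinset.mp hx.2 i

open Classical in
lemma sum_p_supp_le (N : ℕ) {p : ℝ} (h0 : 0 ≤ p) :
    ∑ x ∈ (((Fintype.piFinset fun _ : Fin (s+d) => Finset.range (N+1)) ×ˢ
        (Fintype.piFinset fun _ : Fin (s+d) => Finset.range (N+1))).filter
        (fun x => Function.Injective x.1 ∧ nval s d x.1 = nval s d x.2 ∧
          ¬ sameParts s d x.1 x.2)), p ^ (supp x).card
      ≤ ((2*(s+d))^(2*(s+d)) : ℕ) * ∑ j ∈ Finset.range (2*(s+d)), ((N:ℝ)+1)^j * p^(j+1) := by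
  classical
  set U := Fintype.piFinset fun _ : Fin (s+d) => Finset.range (N+1) with hU
  set X := ((U ×ˢ U).filter (fun x => Function.Injective x.1 ∧ nval s d x.1 = nval s d x.2 ∧
      ¬ sameParts s d x.1 x.2)) with hX
  set Pats := Fintype.piFinset (fun _ : (Fin (s+d) ⊕ Fin (s+d)) => Finset.range (2*(s+d)))
    with hPats
  have hmaps : ∀ x ∈ X, pat x ∈ Pats := by
    intro x _
    rw [hPats, Fintype.mem_piFinset]
    intro q
    exact Finset.mem_range.mpr (pat_lt x q)
  rw [← Finset.sum_fiberwise_of_maps_to hmaps (fun x => p ^ (supp x).card)]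
  have hBnonneg : (0:ℝ) ≤ ∑ j ∈ Finset.range (2*(s+d)), ((N:ℝ)+1)^j * p^(j+1) := by
    apply Finset.sum_nonneg
    intro j _
    positivity
  have hbound : ∀ σ ∈ Pats, ∑ x ∈ X.filter (fun x => pat x = σ), p ^ (supp x).card
      ≤ ∑ j ∈ Finset.range (2*(s+d)), ((N:ℝ)+1)^j * p^(j+1) := by
    intro σ hσ
    by_cases hne : (X.filter (fun x => pat x = σ)).Nonempty
    swap
    · rw [Finset.not_nonempty_iff_eq_empty.mp hne, Finset.sum_empty]
      exact hBnonneg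
    obtain ⟨x₀, hx₀⟩ := hne
    rw [Finset.mem_filter] at hx₀
    obtain ⟨hx₀X, hx₀σ⟩ := hx₀
    rw [hX, Finset.mem_filter] at hx₀X
    obtain ⟨hx₀UU, hx₀inj, hx₀val, hx₀ns⟩ := hx₀X
    have hex : ∃ b ∈ Finset.range (2*(s+d)), coefP s d σ b ≠ 0 := by
      rw [← hx₀σ]
      exact exists_coef_ne x₀ hx₀inj hx₀val hx₀ns
    obtain ⟨b₀, hb₀mem, hb₀ne⟩ := hex
    set J := Finset.univ.image σ with hJ
    have hb₀J : b₀ ∈ J := by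
      by_contra hcon
      apply hb₀ne
      rw [coefP]
      apply Finset.sum_eq_zero
      intro q _
      exact if_neg (fun h => hcon (Finset.mem_image.mpr ⟨q, Finset.mem_univ q, h⟩))
    have hJsub : J ⊆ Finset.range (2*(s+d)) := by
      intro b hb
      obtain ⟨q, _, rfl⟩ := Finset.mem_image.mp hb
      have := Fintype.mem_piFinset.mp hσ q
      exact this
    have hJcard_le : J.card ≤ 2*(s+d) := by
      refine le_trans (Finset.card_le_card hJsub) ?_
      rw [Finset.card_range]
    have hJcard_pos : 0 < J.card := Finset.card_pos.mpr ⟨b₀, hb₀J⟩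
    have hcoef0 : ∀ b, b ∉ J → coefP s d σ b = 0 := by
      intro b hb
      rw [coefP]
      apply Finset.sum_eq_zero
      intro q _
      exact if_neg (fun h => hb (Finset.mem_image.mpr ⟨q, Finset.mem_univ q, h⟩))
    have hsupp_card : ∀ x ∈ X.filter (fun x => pat x = σ), (supp x).card = J.card := by
      intro x hx
      rw [Finset.mem_filter] at hx
      rw [card_supp_eq_pat x, hx.2]
    -- fiber cardinality bound
    have hfib : (X.filter (fun x => pat x = σ)).card ≤ (N+1)^(J.card - 1) := by
      have htar : (Fintype.piFinset (fun b : Fin (2*(s+d)) =>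
          if ((b:ℕ) ∈ J ∧ (b:ℕ) ≠ b₀) then Finset.range (N+1) else ({0} : Finset ℕ))).card
          = (N+1)^(J.card - 1) := by
        rw [Fintype.card_piFinset]
        have hcards : ∀ b : Fin (2*(s+d)),
            (if ((b:ℕ) ∈ J ∧ (b:ℕ) ≠ b₀) then Finset.range (N+1) else ({0} : Finset ℕ)).card
            = if ((b:ℕ) ∈ J ∧ (b:ℕ) ≠ b₀) then N+1 else 1 := by
          intro b
          by_cases hb : ((b:ℕ) ∈ J ∧ (b:ℕ) ≠ b₀) <;> simp [hb]
        rw [Finset.prod_congr rfl (fun b _ => hcards b)]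
        rw [← Finset.prod_filter_mul_prod_filter_not Finset.univ
          (fun b : Fin (2*(s+d)) => (b:ℕ) ∈ J ∧ (b:ℕ) ≠ b₀)]
        rw [Finset.prod_congr rfl (fun b hb => if_pos (Finset.mem_filter.mp hb).2),
          Finset.prod_congr rfl (fun b hb => if_neg (Finset.mem_filter.mp hb).2),
          Finset.prod_const, Finset.prod_const, one_pow, mul_one]
        congr 1
        -- card of the filter = J.card - 1
        rw [← Finset.card_erase_of_mem hb₀J]
        refine Finset.card_nbij (fun b : Fin (2*(s+d)) => (b:ℕ)) ?_ ?_ ?_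
        · intro b hb
          rw [Finset.mem_coe, Finset.mem_filter] at hb
          exact Finset.mem_erase.mpr ⟨hb.2.2, hb.2.1⟩
        · intro b _ b' _ h
          exact Fin.val_injective h
        · intro y hy
          simp only [Finset.coe_filter, Set.mem_image, Set.mem_setOf_eq, Finset.mem_coe] at hy ⊢
          rw [Finset.mem_erase] at hy
          have hylt : y < 2*(s+d) := Finset.mem_range.mp (hJsub hy.2)
          exact ⟨⟨y, hylt⟩, ⟨Finset.mem_univ _, hy.2, hy.1⟩, rfl⟩
      rw [← htar]
      apply Finset.card_le_card_of_injOn (fun x => fun b : Fin (2*(s+d)) =>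
        if ((b:ℕ) ∈ J ∧ (b:ℕ) ≠ b₀) then vmap x (b:ℕ) else 0)
      · intro x hx
        rw [Finset.mem_coe, Finset.mem_filter] at hx
        obtain ⟨hxX, hxσ⟩ := hx
        rw [hX, Finset.mem_filter] at hxX
        rw [Finset.mem_coe, Fintype.mem_piFinset]
        intro b
        by_cases hb : ((b:ℕ) ∈ J ∧ (b:ℕ) ≠ b₀)
        · beta_reduce; rw [if_pos hb, if_pos hb]
          obtain ⟨q, _, hq⟩ := Finset.mem_image.mp hb.1
          have hpq : pat x q = (b:ℕ) := by rw [hxσ]; exact hq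
          rw [← hpq, vmap_pat]
          exact supp_subset hxX.1 (Fx_mem_supp x q)
        · beta_reduce; rw [if_neg hb, if_neg hb]
          exact Finset.mem_singleton_self 0
      · intro x hx x' hx' hxx
        simp only [Finset.coe_filter, Set.mem_setOf_eq] at hx hx'
        obtain ⟨hxX, hxσ⟩ := hx
        obtain ⟨hx'X, hx'σ⟩ := hx'
        rw [hX, Finset.mem_filter] at hxX hx'X
        have hvals : ∀ b ∈ J, b ≠ b₀ → vmap x b = vmap x' b := by
          intro b hbJ hbne
          have hblt : b < 2*(s+d) := Finset.mem_range.mp (hJsub hbJ)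
          have hc := congrFun hxx (⟨b, hblt⟩ : Fin (2*(s+d)))
          dsimp only at hc
          rw [if_pos ⟨hbJ, hbne⟩, if_pos ⟨hbJ, hbne⟩] at hc
          exact hc
        have heq := sum_coef_vmap x hxX.2.2.1
        have heq' := sum_coef_vmap x' hx'X.2.2.1
        rw [hxσ] at heq
        rw [hx'σ] at heq'
        have hsingle : ∑ b ∈ Finset.range (2*(s+d)),
            (coefP s d σ b * ((vmap x b : ℤ) - (vmap x' b : ℤ)))
            = coefP s d σ b₀ * ((vmap x b₀ : ℤ) - (vmap x' b₀ : ℤ)) := by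
          apply Finset.sum_eq_single_of_mem b₀ hb₀mem
          intro b _ hbne
          by_cases hbJ : b ∈ J
          · rw [hvals b hbJ hbne, sub_self, mul_zero]
          · rw [hcoef0 b hbJ, zero_mul]
        have hdiff : coefP s d σ b₀ * ((vmap x b₀ : ℤ) - (vmap x' b₀ : ℤ)) = 0 := by
          rw [← hsingle]
          have hterm : ∀ b, coefP s d σ b * ((vmap x b : ℤ) - (vmap x' b : ℤ))
              = coefP s d σ b * (vmap x b : ℤ) - coefP s d σ b * (vmap x' b : ℤ) :=
            fun b => by ring
          rw [Finset.sum_congr rfl (fun b _ => hterm b), Finset.sum_sub_distrib, heq, heq',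
            sub_zero]
        have hb₀val : vmap x b₀ = vmap x' b₀ := by
          rcases mul_eq_zero.mp hdiff with h | h
          · exact absurd h hb₀ne
          · exact_mod_cast sub_eq_zero.mp h
        have hFx : ∀ q, Fx x q = Fx x' q := by
          intro q
          have hpx : pat x q = σ q := congrFun hxσ q
          have hpx' : pat x' q = σ q := congrFun hx'σ q
          have hvq : vmap x (σ q) = vmap x' (σ q) := by
            by_cases hq : σ q = b₀
            · rw [hq]; exact hb₀val
            · exact hvals (σ q) (Finset.mem_image.mpr ⟨q, Finset.mem_univ q, rfl⟩) hq
          rw [← vmap_pat x q, ← vmap_pat x' q, hpx, hpx']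
          exact hvq
        have h1 : x.1 = x'.1 := funext fun i => hFx (Sum.inl i)
        have h2 : x.2 = x'.2 := funext fun i => hFx (Sum.inr i)
        exact Prod.ext h1 h2
    -- assemble the fiber bound
    rw [Finset.sum_congr rfl (fun x hx => by rw [hsupp_card x hx]), Finset.sum_const,
      nsmul_eq_mul]
    have hstep : ((X.filter (fun x => pat x = σ)).card : ℝ) * p ^ J.card
        ≤ (((N:ℝ)+1))^(J.card - 1) * p ^ J.card := by
      apply mul_le_mul_of_nonneg_right _ (pow_nonneg h0 _)
      calc ((X.filter (fun x => pat x = σ)).card : ℝ) ≤ (((N+1)^(J.card - 1) : ℕ) : ℝ) := by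
            exact_mod_cast hfib
        _ = (((N:ℝ)+1))^(J.card - 1) := by push_cast; ring
    refine le_trans hstep ?_
    have hJrw : J.card = (J.card - 1) + 1 := by omega
    have hterm_eq : (((N:ℝ)+1))^(J.card - 1) * p ^ J.card
        = (((N:ℝ)+1))^(J.card - 1) * p ^ ((J.card - 1) + 1) := by
      rw [← hJrw]
    rw [hterm_eq]
    apply Finset.single_le_sum (f := fun j => (((N:ℝ)+1))^j * p^(j+1))
    · intro j _
      positivity
    · rw [Finset.mem_range]
      omega
  refine le_trans (Finset.sum_le_sum hbound) ?_
  rw [Finset.sum_const, nsmul_eq_mul]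
  apply mul_le_mul_of_nonneg_right _ hBnonneg
  have hPcard : Pats.card = (2*(s+d))^(2*(s+d)) := by
    rw [hPats, Fintype.card_piFinset]
    rw [Finset.prod_const, Finset.card_range, Finset.card_univ]
    congr 1
    rw [Fintype.card_sum, Fintype.card_fin]
    omega
  rw [hPcard]


/-! ### Layer 5: glue -/

lemma piFinset_image_cast (n : ℕ) (A : Finset ℕ) :
    (Fintype.piFinset fun _ : Fin n => A.image (fun m : ℕ => (m:ℤ)))
      = (Fintype.piFinset fun _ : Fin n => A).image (fun f => fun i => ((f i : ℕ) : ℤ)) := by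
  classical
  ext g
  simp only [Fintype.mem_piFinset, Finset.mem_image]
  constructor
  · intro hg
    choose f hf hgf using hg
    exact ⟨f, hf, funext hgf⟩
  · rintro ⟨f, hf, rfl⟩ i
    exact ⟨f i, hf i, rfl⟩

lemma genSumset_eq (s d : ℕ) (A : Finset ℕ) :
    genSumset s d (A.image fun m : ℕ => (m : ℤ))
      = (Fintype.piFinset fun _ : Fin (s+d) => A).image (nval s d) := by
  classical
  rw [genSumset, piFinset_image_cast, Finset.image_image]
  apply Finset.image_congr
  intro f _
  rfl

open Classical in
lemma ex_badPairs {s d : ℕ} (N : ℕ) (p : ℝ) :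
    ∑ A ∈ (Finset.range (N+1)).powerset, w N p A * ((badPairs s d A).card : ℝ)
      = ∑ x ∈ (((Fintype.piFinset fun _ : Fin (s+d) => Finset.range (N+1)) ×ˢ
          (Fintype.piFinset fun _ : Fin (s+d) => Finset.range (N+1))).filter
          (fun x => Function.Injective x.1 ∧ nval s d x.1 = nval s d x.2 ∧
            ¬ sameParts s d x.1 x.2)), p ^ (supp x).card := by
  classical
  set X := (((Fintype.piFinset fun _ : Fin (s+d) => Finset.range (N+1)) ×ˢ
      (Fintype.piFinset fun _ : Fin (s+d) => Finset.range (N+1))).filter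
      (fun x => Function.Injective x.1 ∧ nval s d x.1 = nval s d x.2 ∧
        ¬ sameParts s d x.1 x.2)) with hX
  have hcard : ∀ A ∈ (Finset.range (N+1)).powerset,
      ((badPairs s d A).card : ℝ) = ∑ x ∈ X, (if supp x ⊆ A then (1:ℝ) else 0) := by
    intro A hA
    have hAr := Finset.mem_powerset.mp hA
    have hbp : badPairs s d A = X.filter (fun x => supp x ⊆ A) := by
      ext x
      rw [badPairs, Finset.mem_filter, Finset.mem_product, Finset.mem_filter, hX,
        Finset.mem_filter, Finset.mem_product]
      constructor
      · rintro ⟨⟨h1, h2⟩, h3⟩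
        have h1' : ∀ i, x.1 i ∈ A := Fintype.mem_piFinset.mp h1
        have h2' : ∀ i, x.2 i ∈ A := Fintype.mem_piFinset.mp h2
        refine ⟨⟨⟨?_, ?_⟩, h3⟩, ?_⟩
        · exact Fintype.mem_piFinset.mpr fun i => hAr (h1' i)
        · exact Fintype.mem_piFinset.mpr fun i => hAr (h2' i)
        · intro y hy
          obtain ⟨q, rfl⟩ := mem_supp_iff.mp hy
          rcases q with i | i
          · exact h1' i
          · exact h2' i
      · rintro ⟨⟨⟨h1, h2⟩, h3⟩, h4⟩
        refine ⟨⟨?_, ?_⟩, h3⟩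
        · exact Fintype.mem_piFinset.mpr fun i => h4 (Fx_mem_supp x (Sum.inl i))
        · exact Fintype.mem_piFinset.mpr fun i => h4 (Fx_mem_supp x (Sum.inr i))
    rw [hbp, Finset.card_filter]
    push_cast
    apply Finset.sum_congr rfl
    intro x _
    by_cases hx : supp x ⊆ A <;> simp [hx]
  rw [Finset.sum_congr rfl (fun A hA => by rw [hcard A hA])]
  exact ex_indicator_sum X supp (fun x hx => supp_subset (Finset.mem_filter.mp hx).1)

lemma fact_step (s d : ℕ) (hds : d ≤ s) (hd : 1 ≤ d) :
    s.factorial * d.factorial < (s+1).factorial * (d-1).factorial := by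
  have h1 : d.factorial = d * (d-1).factorial := by
    conv_lhs => rw [show d = (d-1)+1 by omega]
    rw [Nat.factorial_succ]
    congr 2
    omega
  rw [h1, Nat.factorial_succ]
  have hf1 : 0 < s.factorial := Nat.factorial_pos s
  have hf2 : 0 < (d-1).factorial := Nat.factorial_pos _
  calc s.factorial * (d * (d-1).factorial) = d * (s.factorial * (d-1).factorial) := by ring
    _ < (s+1) * (s.factorial * (d-1).factorial) :=
        Nat.mul_lt_mul_of_lt_of_le (by omega) le_rfl (Nat.mul_pos hf1 hf2)
    _ = (s+1) * s.factorial * (d-1).factorial := by ring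

lemma fact_lt (t s d : ℕ) (hds : d ≤ s) (ht : 0 < t) (htd : t ≤ d) :
    s.factorial * d.factorial < (s+t).factorial * (d-t).factorial := by
  induction t with
  | zero => omega
  | succ t ih =>
    by_cases ht0 : t = 0
    · subst ht0
      simpa using fact_step s d hds (by omega)
    · have h1 := ih (by omega) (by omega)
      have h2 := fact_step (s+t) (d-t) (by omega) (by omega)
      have e1 : d - t - 1 = d - (t+1) := by omega
      have e2 : s + t + 1 = s + (t+1) := by omega
      rw [e1, e2] at h2
      exact lt_trans h1 h2

open Classical in
lemma probD (s d N : ℕ) {p : ℝ} (h0 : 0 ≤ p) (h1 : p ≤ 1) {t : ℝ} (ht : 0 < t) :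
    binomialProb N p (fun A => t < ((badPairs s d A).card : ℝ))
      ≤ (((2*(s+d))^(2*(s+d)) : ℕ) * ∑ j ∈ Finset.range (2*(s+d)),
          ((N:ℝ)+1)^j * p^(j+1)) / t := by
  refine le_trans (markov h0 h1 (fun A => ((badPairs s d A).card : ℝ))
    (fun A => by positivity) ht) ?_
  gcongr
  have hb := sum_p_supp_le (s := s) (d := d) N h0
  rw [← ex_badPairs N p] at hb
  simpa using hb

open Classical in
lemma probCheb (N : ℕ) {p : ℝ} (h0 : 0 ≤ p) (h1 : p ≤ 1) {t : ℝ} (ht : 0 < t) :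
    binomialProb N p (fun A => t < |(A.card:ℝ) - ((N:ℝ)+1)*p|)
      ≤ (((N:ℝ)+1)*p)/t^2 := by
  have hmono : binomialProb N p (fun A => t < |(A.card:ℝ) - ((N:ℝ)+1)*p|)
      ≤ binomialProb N p (fun A => t^2 < ((A.card:ℝ) - ((N:ℝ)+1)*p)^2) := by
    apply prob_mono h0 h1
    intro A _ hE
    have h2 : t^2 < |(A.card:ℝ) - ((N:ℝ)+1)*p|^2 :=
      pow_lt_pow_left₀ hE ht.le (by norm_num)
    rwa [sq_abs] at h2
  refine le_trans hmono (le_trans (markov h0 h1 _ (fun A => sq_nonneg _) (by positivity)) ?_)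
  gcongr
  simpa using ex_sq_card (N := N) h0 h1

lemma ratio_est {θ F₁ F₂ S₁ S₂ kh : ℝ} (hθ : 0 < θ) (hθ2 : θ ≤ 1/2)
    (hF₁ : 0 < F₁) (hF₂ : 0 < F₂) (hkh : 0 < kh)
    (hS₁ : 0 ≤ S₁) (hS₂ : 0 ≤ S₂)
    (h1l : (1-θ)*kh ≤ F₁*S₁) (h1u : F₁*S₁ ≤ (1+θ)*kh)
    (h2l : (1-θ)*kh ≤ F₂*S₂) (h2u : F₂*S₂ ≤ (1+θ)*kh) :
    0 < S₂ ∧ |S₁/S₂ - F₂/F₁| ≤ 4*(F₂/F₁)*θ := by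
  have hS₂pos : 0 < S₂ := by
    by_contra hcon
    push_neg at hcon
    have : S₂ = 0 := le_antisymm hcon hS₂
    rw [this, mul_zero] at h2l
    nlinarith
  refine ⟨hS₂pos, ?_⟩
  have hub : S₁/S₂ ≤ (F₂*(1+4*θ))/F₁ := by
    rw [div_le_div_iff₀ hS₂pos hF₁]
    nlinarith [mul_nonneg hθ.le hkh.le, mul_nonneg (mul_nonneg hθ.le hθ.le) hkh.le]
  have hlb : (F₂*(1-4*θ))/F₁ ≤ S₁/S₂ := by
    rw [div_le_div_iff₀ hF₁ hS₂pos]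
    nlinarith [mul_nonneg hθ.le hkh.le, mul_nonneg (mul_nonneg hθ.le hθ.le) hkh.le]
  rw [abs_le]
  constructor
  · have e : (F₂*(1-4*θ))/F₁ = F₂/F₁ - 4*(F₂/F₁)*θ := by ring
    linarith [e ▸ hlb]
  · have e : (F₂*(1+4*θ))/F₁ = F₂/F₁ + 4*(F₂/F₁)*θ := by ring
    linarith [e ▸ hub]


/-! ### Layer 6: analysis -/

lemma p_tendsto (c δ : ℝ) (hδ0 : 0 < δ) :
    Filter.Tendsto (fun N : ℕ => c * (N:ℝ)^(-δ)) Filter.atTop (nhds 0) := by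
  have h1 : Filter.Tendsto (fun N : ℕ => ((N:ℝ))^(-δ)) Filter.atTop (nhds 0) :=
    (tendsto_rpow_neg_atTop hδ0).comp tendsto_natCast_atTop_atTop
  simpa using h1.const_mul c

lemma K_ge (c δ : ℝ) (hc : 0 < c) (N : ℕ) (hN : 1 ≤ N) :
    c * (N:ℝ)^(1-δ) ≤ ((N:ℝ)+1)*(c*(N:ℝ)^(-δ)) := by
  have hNpos : (0:ℝ) < N := by exact_mod_cast hN
  have e : (N:ℝ)^(1-δ) = (N:ℝ) * (N:ℝ)^(-δ) := by
    rw [show (1:ℝ)-δ = 1 + -δ by ring, Real.rpow_add hNpos, Real.rpow_one]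
  rw [e]
  have hrp : 0 < (N:ℝ)^(-δ) := Real.rpow_pos_of_pos hNpos _
  nlinarith

lemma K_le (c δ : ℝ) (hc : 0 < c) (N : ℕ) (hN : 1 ≤ N) :
    ((N:ℝ)+1)*(c*(N:ℝ)^(-δ)) ≤ 2*c * (N:ℝ)^(1-δ) := by
  have hNpos : (0:ℝ) < N := by exact_mod_cast hN
  have hN1 : (1:ℝ) ≤ N := by exact_mod_cast hN
  have e : (N:ℝ)^(1-δ) = (N:ℝ) * (N:ℝ)^(-δ) := by
    rw [show (1:ℝ)-δ = 1 + -δ by ring, Real.rpow_add hNpos, Real.rpow_one]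
  rw [e]
  have hrp : 0 < (N:ℝ)^(-δ) := Real.rpow_pos_of_pos hNpos _
  have key := mul_le_mul_of_nonneg_right (show (N:ℝ)+1 ≤ 2*(N:ℝ) by linarith)
    (le_of_lt (mul_pos hc hrp))
  nlinarith [key]

lemma K_tendsto (c δ : ℝ) (hc : 0 < c) (hδ2 : δ < 1) :
    Filter.Tendsto (fun N : ℕ => ((N:ℝ)+1)*(c*(N:ℝ)^(-δ))) Filter.atTop Filter.atTop := by
  have base : Filter.Tendsto (fun N : ℕ => c * ((N:ℝ))^(1-δ)) Filter.atTop Filter.atTop :=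
    (((tendsto_rpow_atTop (by linarith : (0:ℝ) < 1-δ)).comp
      tendsto_natCast_atTop_atTop).const_mul_atTop hc)
  apply tendsto_atTop_mono' Filter.atTop ?_ base
  filter_upwards [Filter.eventually_ge_atTop 1] with N hN
  exact K_ge c δ hc N hN

lemma Kh_tendsto (h : ℕ) (c δ : ℝ) (hc : 0 < c) (hδ2 : δ < 1)
    (hδh : (h:ℝ)*(1-δ) < 1) :
    Filter.Tendsto (fun N : ℕ => (((N:ℝ)+1)*(c*(N:ℝ)^(-δ)))^h / ((N:ℝ)+1))
      Filter.atTop (nhds 0) := by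
  apply squeeze_zero' (g := fun N : ℕ => (2*c)^h * ((N:ℝ))^((h:ℝ)*(1-δ) - 1))
  · filter_upwards [Filter.eventually_ge_atTop 1] with N hN
    have hNpos : (0:ℝ) < N := by exact_mod_cast hN
    have hrp : 0 ≤ (N:ℝ)^(-δ) := (Real.rpow_pos_of_pos hNpos _).le
    positivity
  · filter_upwards [Filter.eventually_ge_atTop 1] with N hN
    have hNpos : (0:ℝ) < N := by exact_mod_cast hN
    have hN1 : (1:ℝ) ≤ N := by exact_mod_cast hN
    have hrp : 0 ≤ (N:ℝ)^(-δ) := (Real.rpow_pos_of_pos hNpos _).le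
    have hKnn : 0 ≤ ((N:ℝ)+1)*(c*(N:ℝ)^(-δ)) := by positivity
    have h2 : (((N:ℝ)+1)*(c*(N:ℝ)^(-δ)))^h ≤ (2*c*(N:ℝ)^(1-δ))^h :=
      pow_le_pow_left₀ hKnn (K_le c δ hc N hN) h
    have h4 : ((N:ℝ)^(1-δ))^h = (N:ℝ)^((1-δ)*(h:ℝ)) := by
      rw [← Real.rpow_natCast ((N:ℝ)^(1-δ)) h, ← Real.rpow_mul hNpos.le]
    have h5 : (2*c*(N:ℝ)^(1-δ))^h = (2*c)^h * (N:ℝ)^((1-δ)*(h:ℝ)) := by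
      rw [mul_pow, h4]
    calc (((N:ℝ)+1)*(c*(N:ℝ)^(-δ)))^h / ((N:ℝ)+1)
        ≤ ((2*c)^h * (N:ℝ)^((1-δ)*(h:ℝ))) / ((N:ℝ)+1) := by
          gcongr
          rw [← h5]
          exact h2
      _ ≤ ((2*c)^h * (N:ℝ)^((1-δ)*(h:ℝ))) / (N:ℝ) := by
          have hnum : (0:ℝ) ≤ (2*c)^h * (N:ℝ)^((1-δ)*(h:ℝ)) := by
            have : (0:ℝ) ≤ (N:ℝ)^((1-δ)*(h:ℝ)) := (Real.rpow_pos_of_pos hNpos _).le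
            positivity
          gcongr
          all_goals first
            | exact hNpos
            | exact hnum
            | linarith
      _ = (2*c)^h * (N:ℝ)^((h:ℝ)*(1-δ) - 1) := by
          rw [show (h:ℝ)*(1-δ) - 1 = (1-δ)*(h:ℝ) + (-1) by ring, Real.rpow_add hNpos,
            Real.rpow_neg_one]
          field_simp
  · have hlim : Filter.Tendsto (fun x : ℝ => x^(-(1 - (h:ℝ)*(1-δ)))) Filter.atTop (nhds 0) :=
      tendsto_rpow_neg_atTop (by linarith)
    have e : -(1 - (h:ℝ)*(1-δ)) = (h:ℝ)*(1-δ) - 1 := by ring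
    rw [e] at hlim
    simpa using (hlim.comp tendsto_natCast_atTop_atTop).const_mul ((2*c)^h)


set_option maxHeartbeats 1000000 in
open Classical in
lemma good_implies (h s₁ d₁ s₂ d₂ : ℕ) (hh : 2 ≤ h) (hh1 : s₁ + d₁ = h) (hh2 : s₂ + d₂ = h)
    {θ K : ℝ} (hθ : 0 < θ) (hθ2 : θ ≤ 1/2)
    (hKbig : 2 + 8*(((s₁.factorial*d₁.factorial : ℕ):ℝ) + ((s₂.factorial*d₂.factorial : ℕ):ℝ) + 1)
        *((h:ℝ)^2+1)/θ ≤ K)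
    (A : Finset ℕ)
    (hA1 : |(A.card:ℝ) - K| ≤ K/2)
    (hA2 : ((badPairs s₁ d₁ A).card : ℝ) ≤ θ/2^(h+2) * K^h)
    (hA3 : ((badPairs s₂ d₂ A).card : ℝ) ≤ θ/2^(h+2) * K^h) :
    0 < (genSumset s₂ d₂ (A.image fun m : ℕ => (m : ℤ))).card ∧
      |((genSumset s₁ d₁ (A.image fun m : ℕ => (m : ℤ))).card : ℝ) /
          ((genSumset s₂ d₂ (A.image fun m : ℕ => (m : ℤ))).card : ℝ) -
        ((s₂.factorial * d₂.factorial : ℕ) : ℝ) / ((s₁.factorial * d₁.factorial : ℕ) : ℝ)|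
      ≤ 4 * (((s₂.factorial * d₂.factorial : ℕ) : ℝ) / ((s₁.factorial * d₁.factorial : ℕ) : ℝ)) * θ := by
  classical
  rw [genSumset_eq, genSumset_eq]
  set F₁ : ℝ := ((s₁.factorial*d₁.factorial : ℕ):ℝ) with hF₁def
  set F₂ : ℝ := ((s₂.factorial*d₂.factorial : ℕ):ℝ) with hF₂def
  have hF₁one : (1:ℝ) ≤ F₁ := by
    rw [hF₁def]
    exact_mod_cast Nat.mul_pos (Nat.factorial_pos s₁) (Nat.factorial_pos d₁)
  have hF₂one : (1:ℝ) ≤ F₂ := by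
    rw [hF₂def]
    exact_mod_cast Nat.mul_pos (Nat.factorial_pos s₂) (Nat.factorial_pos d₂)
  have hF₁pos : 0 < F₁ := by linarith
  have hF₂pos : 0 < F₂ := by linarith
  set k : ℝ := (A.card : ℝ) with hkdef
  have hXnn : (0:ℝ) ≤ 8*(F₁+F₂+1)*((h:ℝ)^2+1)/θ := by positivity
  have hKpos : 0 < K := by linarith
  obtain ⟨hk_lo', hk_hi'⟩ := abs_le.mp hA1
  have hk_lo : K/2 ≤ k := by linarith
  have hk_hi : k ≤ 2*K := by linarith
  have hhsqnn : (0:ℝ) ≤ (h:ℝ)^2 := sq_nonneg _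
  have hk1 : 1 ≤ k := by
    have h8 : (2:ℝ) ≤ 8*(F₁+F₂+1)*((h:ℝ)^2+1) := by nlinarith
    have hdiv : (2:ℝ) ≤ 8*(F₁+F₂+1)*((h:ℝ)^2+1)/θ := by
      rw [le_div_iff₀ hθ]
      have : 2*θ ≤ 1 := by linarith
      linarith
    linarith
  have hkpos : (0:ℝ) < k := by linarith
  have hkh_pos : 0 < k^h := pow_pos hkpos h
  have hkh1 : k^(h-1) * k = k^h := by
    rw [← pow_succ]
    congr 1
    omega
  have hθk : 8*(F₁+F₂+1)*((h:ℝ)^2+1) ≤ θ * K := by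
    have hmul := mul_le_mul_of_nonneg_left hKbig hθ.le
    have hXdiv : θ * (8*(F₁+F₂+1)*((h:ℝ)^2+1)/θ) = 8*(F₁+F₂+1)*((h:ℝ)^2+1) := by
      field_simp
    nlinarith
  have hKle2k : K ≤ 2*k := by linarith
  have hKh_le : K^h ≤ 2^h * k^h := by
    calc K^h ≤ (2*k)^h := pow_le_pow_left₀ hKpos.le hKle2k h
      _ = 2^h * k^h := mul_pow 2 k h
  have hpow4 : (θ/2^(h+2)) * (2^h * k^h) = (θ/4) * k^h := by
    rw [pow_add]
    have h2h : (0:ℝ) < 2^h := by positivity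
    field_simp
    ring
  have hD1 : ((badPairs s₁ d₁ A).card : ℝ) ≤ (θ/4) * k^h := by
    refine le_trans hA2 ?_
    rw [← hpow4]
    exact mul_le_mul_of_nonneg_left hKh_le (by positivity)
  have hD2 : ((badPairs s₂ d₂ A).card : ℝ) ≤ (θ/4) * k^h := by
    refine le_trans hA3 ?_
    rw [← hpow4]
    exact mul_le_mul_of_nonneg_left hKh_le (by positivity)
  have hRbound : ∀ F : ℝ, 1 ≤ F → F ≤ F₁ + F₂ → F * ((h:ℝ)*(h:ℝ) * k^(h-1)) ≤ (θ/4) * k^h := by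
    intro F hFone hFle
    have hθkk : 4*(F₁+F₂+1)*((h:ℝ)^2+1) ≤ θ * k := by
      have h1 : θ * (K/2) ≤ θ * k := mul_le_mul_of_nonneg_left hk_lo hθ.le
      have h2 : 4*(F₁+F₂+1)*((h:ℝ)^2+1) ≤ θ * (K/2) := by linarith
      linarith
    have key : F * ((h:ℝ)*(h:ℝ)) * 4 ≤ θ * k := by
      have hhsq : (0:ℝ) ≤ (h:ℝ)*(h:ℝ) := mul_nonneg (Nat.cast_nonneg h) (Nat.cast_nonneg h)
      have e1 : F * ((h:ℝ)*(h:ℝ)) ≤ (F₁+F₂+1) * ((h:ℝ)*(h:ℝ)) :=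
        mul_le_mul_of_nonneg_right (by linarith) hhsq
      have e2 : (F₁+F₂+1) * ((h:ℝ)*(h:ℝ)) ≤ (F₁+F₂+1)*((h:ℝ)^2+1) := by
        have hee : (h:ℝ)*(h:ℝ) ≤ (h:ℝ)^2+1 := by rw [pow_two]; linarith
        exact mul_le_mul_of_nonneg_left hee (by linarith)
      linarith
    calc F * ((h:ℝ)*(h:ℝ) * k^(h-1)) = (F * ((h:ℝ)*(h:ℝ))) * k^(h-1) := by ring
      _ ≤ (θ*k/4) * k^(h-1) := by
          apply mul_le_mul_of_nonneg_right _ (pow_nonneg hkpos.le _)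
          linarith
      _ = (θ/4) * k^h := by rw [← hkh1]; ring
  -- cast the sandwiches
  set S₁ : ℝ := (((Fintype.piFinset fun _ : Fin (s₁+d₁) => A).image (nval s₁ d₁)).card : ℝ)
    with hS₁def
  set S₂ : ℝ := (((Fintype.piFinset fun _ : Fin (s₂+d₂) => A).image (nval s₂ d₂)).card : ℝ)
    with hS₂def
  have hS₁nn : 0 ≤ S₁ := Nat.cast_nonneg _
  have hS₂nn : 0 ≤ S₂ := Nat.cast_nonneg _
  have ep1 : k^(s₁+d₁) = k^h := by rw [hh1]
  have ep1' : k^(s₁+d₁-1) = k^(h-1) := by rw [hh1]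
  have ec1 : (((s₁+d₁) : ℕ):ℝ) = (h:ℝ) := by rw [hh1]
  have ep2 : k^(s₂+d₂) = k^h := by rw [hh2]
  have ep2' : k^(s₂+d₂-1) = k^(h-1) := by rw [hh2]
  have ec2 : (((s₂+d₂) : ℕ):ℝ) = (h:ℝ) := by rw [hh2]
  have hs1R : k^h ≤ F₁ * S₁ + (h:ℝ)*(h:ℝ) * k^(h-1) + ((badPairs s₁ d₁ A).card : ℝ) := by
    have hn := sandwich_lower (s := s₁) (d := d₁) A
    have hr : k^(s₁+d₁) ≤ F₁ * S₁ + (((s₁+d₁) : ℕ):ℝ)*(((s₁+d₁) : ℕ):ℝ) * k^(s₁+d₁-1)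
        + ((badPairs s₁ d₁ A).card : ℝ) := by
      rw [hF₁def, hS₁def, hkdef]
      push_cast
      exact_mod_cast hn
    rw [ep1, ep1', ec1] at hr
    exact hr
  have hs1uR : F₁ * S₁ ≤ k^h + F₁ * ((h:ℝ)*(h:ℝ) * k^(h-1)) := by
    have hn := sandwich_upper (s := s₁) (d := d₁) A
    have hr : F₁ * S₁ ≤ k^(s₁+d₁) + F₁ * ((((s₁+d₁) : ℕ):ℝ)*(((s₁+d₁) : ℕ):ℝ) * k^(s₁+d₁-1)) := by
      rw [hF₁def, hS₁def, hkdef]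
      push_cast
      exact_mod_cast hn
    rw [ep1, ep1', ec1] at hr
    exact hr
  have hs2R : k^h ≤ F₂ * S₂ + (h:ℝ)*(h:ℝ) * k^(h-1) + ((badPairs s₂ d₂ A).card : ℝ) := by
    have hn := sandwich_lower (s := s₂) (d := d₂) A
    have hr : k^(s₂+d₂) ≤ F₂ * S₂ + (((s₂+d₂) : ℕ):ℝ)*(((s₂+d₂) : ℕ):ℝ) * k^(s₂+d₂-1)
        + ((badPairs s₂ d₂ A).card : ℝ) := by
      rw [hF₂def, hS₂def, hkdef]
      push_cast
      exact_mod_cast hn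
    rw [ep2, ep2', ec2] at hr
    exact hr
  have hs2uR : F₂ * S₂ ≤ k^h + F₂ * ((h:ℝ)*(h:ℝ) * k^(h-1)) := by
    have hn := sandwich_upper (s := s₂) (d := d₂) A
    have hr : F₂ * S₂ ≤ k^(s₂+d₂) + F₂ * ((((s₂+d₂) : ℕ):ℝ)*(((s₂+d₂) : ℕ):ℝ) * k^(s₂+d₂-1)) := by
      rw [hF₂def, hS₂def, hkdef]
      push_cast
      exact_mod_cast hn
    rw [ep2, ep2', ec2] at hr
    exact hr
  have hR1 : (1:ℝ) * ((h:ℝ)*(h:ℝ) * k^(h-1)) ≤ (θ/4) * k^h :=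
    hRbound 1 le_rfl (by linarith)
  have hRF₁ : F₁ * ((h:ℝ)*(h:ℝ) * k^(h-1)) ≤ (θ/4) * k^h :=
    hRbound F₁ hF₁one (by linarith)
  have hRF₂ : F₂ * ((h:ℝ)*(h:ℝ) * k^(h-1)) ≤ (θ/4) * k^h :=
    hRbound F₂ hF₂one (by linarith)
  have hθkh : (0:ℝ) ≤ θ * k^h := mul_nonneg hθ.le hkh_pos.le
  have h1l : (1-θ)*k^h ≤ F₁*S₁ := by linarith [hs1R, hD1, hR1]
  have h1u : F₁*S₁ ≤ (1+θ)*k^h := by linarith [hs1uR, hRF₁]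
  have h2l : (1-θ)*k^h ≤ F₂*S₂ := by linarith [hs2R, hD2, hR1]
  have h2u : F₂*S₂ ≤ (1+θ)*k^h := by linarith [hs2uR, hRF₂]
  obtain ⟨hS₂pos, habs⟩ := ratio_est hθ hθ2 hF₁pos hF₂pos hkh_pos hS₁nn hS₂nn h1l h1u h2l h2u
  constructor
  · rw [hS₂def] at hS₂pos
    exact_mod_cast hS₂pos
  · exact habs


set_option maxHeartbeats 1000000 in
open Classical in
lemma prob_bad_tendsto (h : ℕ) (hh : 2 ≤ h) (c δ : ℝ) (hc : 0 < c)
    (hδ1 : ((h : ℝ) - 1) / (h : ℝ) < δ) (hδ2 : δ < 1)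
    (s₁ d₁ s₂ d₂ : ℕ) (hh1 : s₁ + d₁ = h) (hh2 : s₂ + d₂ = h)
    {η : ℝ} (hη : 0 < η) :
    Filter.Tendsto (fun N : ℕ => binomialProb N (c * (N:ℝ)^(-δ)) (fun A =>
      ¬ ((|(A.card:ℝ) - ((N:ℝ)+1)*(c * (N:ℝ)^(-δ))| ≤ ((N:ℝ)+1)*(c*(N:ℝ)^(-δ))/2) ∧
        (((badPairs s₁ d₁ A).card : ℝ) ≤ η * (((N:ℝ)+1)*(c*(N:ℝ)^(-δ)))^h) ∧
        (((badPairs s₂ d₂ A).card : ℝ) ≤ η * (((N:ℝ)+1)*(c*(N:ℝ)^(-δ)))^h))))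
      Filter.atTop (nhds 0) := by
  have hh' : (2:ℝ) ≤ (h:ℝ) := by exact_mod_cast hh
  have hhpos : (0:ℝ) < h := by linarith
  have hδ0 : 0 < δ := by
    have : (0:ℝ) < ((h:ℝ)-1)/(h:ℝ) := by
      apply div_pos <;> linarith
    linarith
  have hδh : (h:ℝ)*(1-δ) < 1 := by
    have := (div_lt_iff₀ hhpos).mp hδ1
    nlinarith
  have hp0 : ∀ᶠ N : ℕ in Filter.atTop, 0 < c * (N:ℝ)^(-δ) := by
    filter_upwards [Filter.eventually_ge_atTop 1] with N hN
    have : (0:ℝ) < N := by exact_mod_cast hN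
    exact mul_pos hc (Real.rpow_pos_of_pos this _)
  have hp1 : ∀ᶠ N : ℕ in Filter.atTop, c * (N:ℝ)^(-δ) ≤ 1 := by
    have := (p_tendsto c δ hδ0).eventually_lt_const (by norm_num : (0:ℝ) < 1)
    exact this.mono fun N hN => hN.le
  have hKtop := K_tendsto c δ hc hδ2
  have hK1 : ∀ᶠ N : ℕ in Filter.atTop, 1 ≤ ((N:ℝ)+1)*(c*(N:ℝ)^(-δ)) :=
    hKtop.eventually_ge_atTop 1
  have hKh0 := Kh_tendsto h c δ hc hδ2 hδh
  have hgtend : Filter.Tendsto (fun N : ℕ => 4/(((N:ℝ)+1)*(c*(N:ℝ)^(-δ)))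
      + (((((2*(s₁+d₁))^(2*(s₁+d₁)) : ℕ) : ℝ)+(((2*(s₂+d₂))^(2*(s₂+d₂)) : ℕ) : ℝ)) * (2*(h:ℝ))/η)
        * ((((N:ℝ)+1)*(c*(N:ℝ)^(-δ)))^h/((N:ℝ)+1)))
      Filter.atTop (nhds 0) := by
    have t1 : Filter.Tendsto (fun N : ℕ => 4/(((N:ℝ)+1)*(c*(N:ℝ)^(-δ))))
        Filter.atTop (nhds 0) := tendsto_const_nhds.div_atTop hKtop
    have t2 := hKh0.const_mul
      ((((((2*(s₁+d₁))^(2*(s₁+d₁)) : ℕ) : ℝ)+(((2*(s₂+d₂))^(2*(s₂+d₂)) : ℕ) : ℝ)) * (2*(h:ℝ))/η))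
    rw [mul_zero] at t2
    simpa using t1.add t2
  apply squeeze_zero' ?_ ?_ hgtend
  · filter_upwards [hp0, hp1] with N h0 h1
    exact prob_nonneg h0.le h1 _
  · filter_upwards [hp0, hp1, hK1] with N h0N h1N hK1N
    set p := c * (N:ℝ)^(-δ) with hpdef
    set K := ((N:ℝ)+1)*p with hKdef
    have hKpos : 0 < K := by linarith
    have hKne : K ≠ 0 := ne_of_gt hKpos
    have hKh_pos : 0 < K^h := pow_pos hKpos h
    have hNpos : (0:ℝ) < (N:ℝ)+1 := by positivity
    have hC₁nn : (0:ℝ) ≤ (((2*(s₁+d₁))^(2*(s₁+d₁)) : ℕ) : ℝ) := Nat.cast_nonneg _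
    have hC₂nn : (0:ℝ) ≤ (((2*(s₂+d₂))^(2*(s₂+d₂)) : ℕ) : ℝ) := Nat.cast_nonneg _
    have hsub : binomialProb N p (fun A =>
        ¬ ((|(A.card:ℝ) - K| ≤ K/2) ∧
          (((badPairs s₁ d₁ A).card : ℝ) ≤ η * K^h) ∧
          (((badPairs s₂ d₂ A).card : ℝ) ≤ η * K^h)))
        ≤ binomialProb N p (fun A => (K/2 < |(A.card:ℝ) - K|) ∨
            ((η*K^h < ((badPairs s₁ d₁ A).card : ℝ)) ∨
             (η*K^h < ((badPairs s₂ d₂ A).card : ℝ)))) := by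
      apply prob_mono h0N.le h1N
      intro A _ hA
      by_contra hcon
      push_neg at hcon
      exact hA ⟨hcon.1, hcon.2.1, hcon.2.2⟩
    refine le_trans hsub ?_
    refine le_trans (prob_union h0N.le h1N _ _) ?_
    have hu2 := prob_union (N := N) (p := p) h0N.le h1N
      (fun A => η*K^h < ((badPairs s₁ d₁ A).card : ℝ))
      (fun A => η*K^h < ((badPairs s₂ d₂ A).card : ℝ))
    have hcheb := probCheb N h0N.le h1N (t := K/2) (by linarith)
    have hchebeq : (((N:ℝ)+1)*p)/((K/2)^2) = 4/K := by
      rw [← hKdef]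
      field_simp
      ring
    rw [hchebeq] at hcheb
    have hX : ∀ m : ℕ, m = h → ∑ j ∈ Finset.range (2*m), ((N:ℝ)+1)^j * p^(j+1)
        ≤ (2*(h:ℝ)) * (K^h * (K^h / ((N:ℝ)+1))) := by
      intro m hm
      rw [hm]
      have hterm : ∀ j ∈ Finset.range (2*h), ((N:ℝ)+1)^j * p^(j+1) ≤ p * K^(2*h-1) := by
        intro j hj
        have e : ((N:ℝ)+1)^j * p^(j+1) = p * K^j := by
          have eK : K^j = ((N:ℝ)+1)^j * p^j := by
            rw [hKdef]
            exact mul_pow _ _ j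
          rw [eK, pow_succ]
          ring
        rw [e]
        have hle : K^j ≤ K^(2*h-1) := by
          apply pow_le_pow_right₀ hK1N
          have := Finset.mem_range.mp hj
          omega
        exact mul_le_mul_of_nonneg_left hle h0N.le
      have hident2 : K^(h-1) * p = K^h / ((N:ℝ)+1) := by
        rw [eq_div_iff (ne_of_gt hNpos)]
        calc K^(h-1) * p * ((N:ℝ)+1) = K^(h-1) * (((N:ℝ)+1) * p) := by ring
          _ = K^(h-1) * K := by rw [← hKdef]
          _ = K^h := by
              rw [← pow_succ]
              congr 1
              omega
      have hident : p * K^(2*h-1) = K^h * (K^h / ((N:ℝ)+1)) := by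
        rw [← hident2]
        have e2 : K^h * (K^(h-1) * p) = (K^h * K^(h-1)) * p := by ring
        rw [e2, ← pow_add]
        have e3 : h + (h-1) = 2*h - 1 := by omega
        rw [e3]
        ring
      calc ∑ j ∈ Finset.range (2*h), ((N:ℝ)+1)^j * p^(j+1)
          ≤ ∑ _j ∈ Finset.range (2*h), p * K^(2*h-1) := Finset.sum_le_sum hterm
        _ = (2*(h:ℝ)) * (p * K^(2*h-1)) := by
            rw [Finset.sum_const, Finset.card_range, nsmul_eq_mul]
            push_cast
            ring
        _ = (2*(h:ℝ)) * (K^h * (K^h / ((N:ℝ)+1))) := by rw [hident]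
    have hD1bound : binomialProb N p (fun A => η*K^h < ((badPairs s₁ d₁ A).card : ℝ))
        ≤ ((((2*(s₁+d₁))^(2*(s₁+d₁)) : ℕ) : ℝ)*(2*(h:ℝ))/η) * (K^h/((N:ℝ)+1)) := by
      refine le_trans (probD s₁ d₁ N h0N.le h1N (t := η*K^h) (by positivity)) ?_
      rw [div_le_iff₀ (by positivity : (0:ℝ) < η*K^h)]
      calc (((2*(s₁+d₁))^(2*(s₁+d₁)) : ℕ) : ℝ)
            * ∑ j ∈ Finset.range (2*(s₁+d₁)), ((N:ℝ)+1)^j * p^(j+1)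
          ≤ (((2*(s₁+d₁))^(2*(s₁+d₁)) : ℕ) : ℝ)
              * ((2*(h:ℝ)) * (K^h * (K^h / ((N:ℝ)+1)))) :=
            mul_le_mul_of_nonneg_left (hX (s₁+d₁) hh1) hC₁nn
        _ = ((((2*(s₁+d₁))^(2*(s₁+d₁)) : ℕ) : ℝ)*(2*(h:ℝ))/η) * (K^h/((N:ℝ)+1)) * (η*K^h) := by
            field_simp
    have hD2bound : binomialProb N p (fun A => η*K^h < ((badPairs s₂ d₂ A).card : ℝ))
        ≤ ((((2*(s₂+d₂))^(2*(s₂+d₂)) : ℕ) : ℝ)*(2*(h:ℝ))/η) * (K^h/((N:ℝ)+1)) := by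
      refine le_trans (probD s₂ d₂ N h0N.le h1N (t := η*K^h) (by positivity)) ?_
      rw [div_le_iff₀ (by positivity : (0:ℝ) < η*K^h)]
      calc (((2*(s₂+d₂))^(2*(s₂+d₂)) : ℕ) : ℝ)
            * ∑ j ∈ Finset.range (2*(s₂+d₂)), ((N:ℝ)+1)^j * p^(j+1)
          ≤ (((2*(s₂+d₂))^(2*(s₂+d₂)) : ℕ) : ℝ)
              * ((2*(h:ℝ)) * (K^h * (K^h / ((N:ℝ)+1)))) :=
            mul_le_mul_of_nonneg_left (hX (s₂+d₂) hh2) hC₂nn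
        _ = ((((2*(s₂+d₂))^(2*(s₂+d₂)) : ℕ) : ℝ)*(2*(h:ℝ))/η) * (K^h/((N:ℝ)+1)) * (η*K^h) := by
            field_simp
    have hsumid : ((((2*(s₁+d₁))^(2*(s₁+d₁)) : ℕ) : ℝ)*(2*(h:ℝ))/η) * (K^h/((N:ℝ)+1))
        + ((((2*(s₂+d₂))^(2*(s₂+d₂)) : ℕ) : ℝ)*(2*(h:ℝ))/η) * (K^h/((N:ℝ)+1))
        = (((((2*(s₁+d₁))^(2*(s₁+d₁)) : ℕ) : ℝ)+(((2*(s₂+d₂))^(2*(s₂+d₂)) : ℕ) : ℝ))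
            * (2*(h:ℝ))/η) * (K^h/((N:ℝ)+1)) := by
      ring
    linarith [hu2, hcheb, hD1bound, hD2bound]


end FDR

theorem fast_decay_ratio (h : ℕ) (hh : 2 ≤ h) (c δ : ℝ) (hc : 0 < c)
    (hδ1 : ((h : ℝ) - 1) / (h : ℝ) < δ) (hδ2 : δ < 1)
    (s₁ d₁ s₂ d₂ : ℕ) (hsd1 : d₁ ≤ s₁) (hsd2 : d₂ ≤ s₂)
    (hh1 : s₁ + d₁ = h) (hh2 : s₂ + d₂ = h) (hd : d₂ < d₁) :
    (∀ ε : ℝ, 0 < ε →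
      Tendsto (fun N : ℕ =>
        binomialProb N (c * (N : ℝ) ^ (-δ)) fun A =>
          ε < |((genSumset s₁ d₁ (A.image fun m : ℕ => (m : ℤ))).card : ℝ) /
                ((genSumset s₂ d₂ (A.image fun m : ℕ => (m : ℤ))).card : ℝ) -
              ((Nat.factorial s₂ * Nat.factorial d₂ : ℕ) : ℝ) /
                ((Nat.factorial s₁ * Nat.factorial d₁ : ℕ) : ℝ)|)
        atTop (nhds 0)) ∧
    Tendsto (fun N : ℕ =>
      binomialProb N (c * (N : ℝ) ^ (-δ)) fun A =>
        (genSumset s₂ d₂ (A.image fun m : ℕ => (m : ℤ))).card <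
          (genSumset s₁ d₁ (A.image fun m : ℕ => (m : ℤ))).card)
      atTop (nhds 1) := by
  classical
  have hh' : (2:ℝ) ≤ (h:ℝ) := by exact_mod_cast hh
  have hδ0 : 0 < δ := by
    have : (0:ℝ) < ((h:ℝ)-1)/(h:ℝ) := by
      apply div_pos <;> linarith
    linarith
  set F₁ : ℝ := ((Nat.factorial s₁ * Nat.factorial d₁ : ℕ) : ℝ) with hF₁def
  set F₂ : ℝ := ((Nat.factorial s₂ * Nat.factorial d₂ : ℕ) : ℝ) with hF₂def
  have hF₁one : (1:ℝ) ≤ F₁ := by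
    rw [hF₁def]
    exact_mod_cast Nat.mul_pos (Nat.factorial_pos s₁) (Nat.factorial_pos d₁)
  have hF₂one : (1:ℝ) ≤ F₂ := by
    rw [hF₂def]
    exact_mod_cast Nat.mul_pos (Nat.factorial_pos s₂) (Nat.factorial_pos d₂)
  have hF₁pos : 0 < F₁ := by linarith
  have hF₂pos : 0 < F₂ := by linarith
  have hFlt : F₁ < F₂ := by
    rw [hF₁def, hF₂def]
    have key := FDR.fact_lt (d₁ - d₂) s₁ d₁ hsd1 (by omega) (by omega)
    have e1 : d₁ - (d₁ - d₂) = d₂ := by omega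
    have e2 : s₁ + (d₁ - d₂) = s₂ := by omega
    rw [e1, e2] at key
    exact_mod_cast key
  set r : ℝ := F₂ / F₁ with hrdef
  have hrpos : 0 < r := div_pos hF₂pos hF₁pos
  have hr1 : 1 < r := by
    rw [hrdef]
    exact (one_lt_div hF₁pos).mpr hFlt
  have hp0 : ∀ᶠ N : ℕ in atTop, 0 < c * (N:ℝ)^(-δ) := by
    filter_upwards [eventually_ge_atTop 1] with N hN
    have : (0:ℝ) < N := by exact_mod_cast hN
    exact mul_pos hc (Real.rpow_pos_of_pos this _)
  have hp1 : ∀ᶠ N : ℕ in atTop, c * (N:ℝ)^(-δ) ≤ 1 := by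
    have := (FDR.p_tendsto c δ hδ0).eventually_lt_const (by norm_num : (0:ℝ) < 1)
    exact this.mono fun N hN => hN.le
  have hKtop := FDR.K_tendsto c δ hc hδ2
  have key : ∀ θ : ℝ, 0 < θ → θ ≤ 1/2 →
      (Tendsto (fun N : ℕ => binomialProb N (c * (N:ℝ)^(-δ)) (fun A =>
        ¬ ((|(A.card:ℝ) - ((N:ℝ)+1)*(c * (N:ℝ)^(-δ))| ≤ ((N:ℝ)+1)*(c*(N:ℝ)^(-δ))/2) ∧
          (((FDR.badPairs s₁ d₁ A).card : ℝ) ≤ θ/2^(h+2) * (((N:ℝ)+1)*(c*(N:ℝ)^(-δ)))^h) ∧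
          (((FDR.badPairs s₂ d₂ A).card : ℝ) ≤ θ/2^(h+2) * (((N:ℝ)+1)*(c*(N:ℝ)^(-δ)))^h))))
        atTop (nhds 0))
      ∧ ∀ᶠ N : ℕ in atTop, ∀ A : Finset ℕ,
          ((|(A.card:ℝ) - ((N:ℝ)+1)*(c * (N:ℝ)^(-δ))| ≤ ((N:ℝ)+1)*(c*(N:ℝ)^(-δ))/2) ∧
          (((FDR.badPairs s₁ d₁ A).card : ℝ) ≤ θ/2^(h+2) * (((N:ℝ)+1)*(c*(N:ℝ)^(-δ)))^h) ∧
          (((FDR.badPairs s₂ d₂ A).card : ℝ) ≤ θ/2^(h+2) * (((N:ℝ)+1)*(c*(N:ℝ)^(-δ)))^h)) →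
          (0 < (genSumset s₂ d₂ (A.image fun m : ℕ => (m : ℤ))).card ∧
           |((genSumset s₁ d₁ (A.image fun m : ℕ => (m : ℤ))).card : ℝ) /
              ((genSumset s₂ d₂ (A.image fun m : ℕ => (m : ℤ))).card : ℝ) - r| ≤ 4 * r * θ) := by
    intro θ hθ0 hθhalf
    constructor
    · exact FDR.prob_bad_tendsto h hh c δ hc hδ1 hδ2 s₁ d₁ s₂ d₂ hh1 hh2 (by positivity)
    · filter_upwards [hKtop.eventually_ge_atTop (2 + 8*(F₁+F₂+1)*((h:ℝ)^2+1)/θ)]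
        with N hKN A hGood
      exact FDR.good_implies h s₁ d₁ s₂ d₂ hh hh1 hh2 hθ0 hθhalf hKN A
        hGood.1 hGood.2.1 hGood.2.2
  constructor
  · intro ε hε
    have hθden : (0:ℝ) < 8*r := by linarith
    set θ := min (1/2 : ℝ) (ε/(8*r)) with hθdef
    have hθ0 : 0 < θ := lt_min (by norm_num) (div_pos hε hθden)
    have hθhalf : θ ≤ 1/2 := min_le_left _ _
    have h4 : 4*r*θ < ε := by
      have hm : θ ≤ ε/(8*r) := min_le_right _ _
      have hmm : 4*r*θ ≤ 4*r*(ε/(8*r)) :=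
        mul_le_mul_of_nonneg_left hm (by linarith)
      have he : 4*r*(ε/(8*r)) = ε/2 := by
        field_simp
        ring
      linarith
    obtain ⟨htend, hdet⟩ := key θ hθ0 hθhalf
    apply squeeze_zero' ?_ ?_ htend
    · filter_upwards [hp0, hp1] with N h0 h1
      exact FDR.prob_nonneg h0.le h1 _
    · filter_upwards [hp0, hp1, hdet] with N h0 h1 hdetN
      apply FDR.prob_mono h0.le h1
      intro A _ hev hGood
      obtain ⟨_, hest⟩ := hdetN A hGood
      linarith
  · set θ := min (1/2 : ℝ) ((r-1)/(8*r)) with hθdef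
    have hθ0 : 0 < θ := lt_min (by norm_num) (div_pos (by linarith) (by linarith))
    have hθhalf : θ ≤ 1/2 := min_le_left _ _
    have h4 : 4*r*θ ≤ (r-1)/2 := by
      have hm : θ ≤ (r-1)/(8*r) := min_le_right _ _
      have hmm : 4*r*θ ≤ 4*r*((r-1)/(8*r)) :=
        mul_le_mul_of_nonneg_left hm (by linarith)
      have he : 4*r*((r-1)/(8*r)) = (r-1)/2 := by
        field_simp
        ring
      linarith
    obtain ⟨htend, hdet⟩ := key θ hθ0 hθhalf
    have hgtend : Tendsto (fun N : ℕ => binomialProb N (c * (N:ℝ)^(-δ)) (fun A =>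
        ¬ ((genSumset s₂ d₂ (A.image fun m : ℕ => (m : ℤ))).card <
            (genSumset s₁ d₁ (A.image fun m : ℕ => (m : ℤ))).card))) atTop (nhds 0) := by
      apply squeeze_zero' ?_ ?_ htend
      · filter_upwards [hp0, hp1] with N h0 h1
        exact FDR.prob_nonneg h0.le h1 _
      · filter_upwards [hp0, hp1, hdet] with N h0 h1 hdetN
        apply FDR.prob_mono h0.le h1
        intro A _ hev hGood
        apply hev
        obtain ⟨hS₂pos, hest⟩ := hdetN A hGood
        have hS₂R : (0:ℝ) < ((genSumset s₂ d₂ (A.image fun m : ℕ => (m : ℤ))).card : ℝ) := by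
          exact_mod_cast hS₂pos
        have hratio : 1 < ((genSumset s₁ d₁ (A.image fun m : ℕ => (m : ℤ))).card : ℝ) /
            ((genSumset s₂ d₂ (A.image fun m : ℕ => (m : ℤ))).card : ℝ) := by
          have hlow := (abs_le.mp hest).1
          linarith
        have hlt : ((genSumset s₂ d₂ (A.image fun m : ℕ => (m : ℤ))).card : ℝ)
            < ((genSumset s₁ d₁ (A.image fun m : ℕ => (m : ℤ))).card : ℝ) := by
          have := (one_lt_div hS₂R).mp hratio
          linarith
        exact_mod_cast hlt
    have hcompl : ∀ N : ℕ, binomialProb N (c * (N:ℝ)^(-δ)) (fun A =>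
        (genSumset s₂ d₂ (A.image fun m : ℕ => (m : ℤ))).card <
          (genSumset s₁ d₁ (A.image fun m : ℕ => (m : ℤ))).card)
        = 1 - binomialProb N (c * (N:ℝ)^(-δ)) (fun A =>
          ¬ ((genSumset s₂ d₂ (A.image fun m : ℕ => (m : ℤ))).card <
            (genSumset s₁ d₁ (A.image fun m : ℕ => (m : ℤ))).card)) := by
      intro N
      have := FDR.prob_compl (N := N) (p := c * (N:ℝ)^(-δ))
        (fun A => (genSumset s₂ d₂ (A.image fun m : ℕ => (m : ℤ))).card <
          (genSumset s₁ d₁ (A.image fun m : ℕ => (m : ℤ))).card)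
      linarith
    have hfin := hgtend.const_sub 1
    rw [sub_zero] at hfin
    exact hfin.congr (fun N => (hcompl N).symm)
end

section
/- Let s ≥ d ≥ 0 be integers with h := s + d ≥ 2. Then for every real number x, the series g(x; s, d) = Σ_{k=1}^∞ (−1)^{k−1}·(b_{h,k}/(s!·d!)^k)·x^{hk} converges. -/
open Finset

/-- The constant `b_{h,k}` of Hogan–Miller. -/
noncomputable def bConst (h k : ℕ) : ℝ :=
  (1 / ((Nat.factorial k : ℝ) * (Nat.factorial (h - 1) : ℝ) ^ k)) *
    (2 * ∑ j ∈ Finset.Icc 1 (h / 2),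
      (j : ℝ) ^ ((h - 1) * k) *
        ∫ t in (0:ℝ)..(1:ℝ),
          (∑ i ∈ Finset.range (j + 1),
            (-1 : ℝ) ^ i * (Nat.choose h i : ℝ) *
              (1 - ((i : ℝ) - t) / (j : ℝ)) ^ (h - 1)) ^ k)

lemma inner_sum_bound (h j : ℕ) (hj : 1 ≤ j) (t : ℝ)
    (ht : t ∈ Set.uIoc (0:ℝ) 1) :
    |∑ i ∈ Finset.range (j + 1),
        (-1 : ℝ) ^ i * (Nat.choose h i : ℝ) * (1 - ((i : ℝ) - t) / (j : ℝ)) ^ (h - 1)|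
      ≤ 2 ^ (2 * h) := by
  rw [Set.uIoc_of_le (by norm_num : (0:ℝ) ≤ 1)] at ht
  obtain ⟨ht0, ht1⟩ := ht
  have hjpos : (0:ℝ) < j := by exact_mod_cast hj
  have hj1 : (1:ℝ) ≤ j := by exact_mod_cast hj
  have step1 : |∑ i ∈ Finset.range (j + 1),
        (-1 : ℝ) ^ i * (Nat.choose h i : ℝ) * (1 - ((i : ℝ) - t) / (j : ℝ)) ^ (h - 1)|
      ≤ ∑ i ∈ Finset.range (j + 1), (Nat.choose h i : ℝ) * 2 ^ (h - 1) := by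
    refine (Finset.abs_sum_le_sum_abs _ _).trans (Finset.sum_le_sum fun i hi => ?_)
    have hij : (i:ℝ) ≤ j := by
      exact_mod_cast Nat.lt_succ_iff.mp (Finset.mem_range.mp hi)
    have hi0 : (0:ℝ) ≤ i := Nat.cast_nonneg i
    have hv : |1 - ((i:ℝ) - t)/j| ≤ 2 := by
      rw [abs_le]
      constructor
      · have h1 : ((i:ℝ) - t)/j ≤ 1 := by
          rw [div_le_one hjpos]; linarith
        linarith
      · have h1 : (-1:ℝ) ≤ ((i:ℝ) - t)/j := by
          rw [le_div_iff₀ hjpos]; nlinarith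
        linarith
    rw [abs_mul, abs_mul, abs_pow, abs_neg, abs_one, one_pow, one_mul,
      Nat.abs_cast, abs_pow]
    have := pow_le_pow_left₀ (abs_nonneg (1 - ((i:ℝ) - t)/j)) hv (h - 1)
    have hc0 : (0:ℝ) ≤ (Nat.choose h i : ℝ) := Nat.cast_nonneg _
    nlinarith [pow_nonneg (abs_nonneg (1 - ((i:ℝ) - t)/j)) (h - 1)]
  have step2 : ∑ i ∈ Finset.range (j + 1), (Nat.choose h i : ℝ) * 2 ^ (h - 1)
      ≤ 2 ^ (2 * h) := by
    have hs : ∑ i ∈ Finset.range (j + 1), (Nat.choose h i : ℝ)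
        ≤ ∑ i ∈ Finset.range (h + 1), (Nat.choose h i : ℝ) := by
      by_cases hjh : j + 1 ≤ h + 1
      · exact Finset.sum_le_sum_of_subset_of_nonneg
          (Finset.range_subset_range.mpr hjh) fun i _ _ => Nat.cast_nonneg _
      · push_neg at hjh
        refine le_of_eq (Finset.sum_subset (Finset.range_subset_range.mpr hjh.le) ?_).symm
        intro i _ hi2
        have : h < i := by simpa using hi2
        simp [Nat.choose_eq_zero_of_lt this]
    have hs2 : ∑ i ∈ Finset.range (h + 1), (Nat.choose h i : ℝ) = 2 ^ h := by
      exact_mod_cast Nat.sum_range_choose h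
    have hpow : (2:ℝ) ^ (h - 1) * 2 ^ h ≤ 2 ^ (2 * h) := by
      rw [← pow_add]
      apply pow_le_pow_right₀ (by norm_num : (1:ℝ) ≤ 2)
      omega
    calc ∑ i ∈ Finset.range (j + 1), (Nat.choose h i : ℝ) * 2 ^ (h - 1)
        = (∑ i ∈ Finset.range (j + 1), (Nat.choose h i : ℝ)) * 2 ^ (h - 1) :=
          (Finset.sum_mul _ _ _).symm
      _ ≤ (2 ^ h : ℝ) * 2 ^ (h - 1) := by
          apply mul_le_mul_of_nonneg_right (hs.trans hs2.le) (by positivity)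
      _ ≤ 2 ^ (2 * h) := by rw [mul_comm]; exact hpow
  exact step1.trans step2

lemma bConst_bound (h k : ℕ) :
    |bConst h k| ≤ 2 * h * ((h:ℝ) ^ (h - 1) * 2 ^ (2 * h)) ^ k / (Nat.factorial k) := by
  have hfac1 : (1:ℝ) ≤ (Nat.factorial (h-1) : ℝ) := by
    exact_mod_cast Nat.one_le_iff_ne_zero.mpr (Nat.factorial_ne_zero _)
  have hfk : (0:ℝ) < (Nat.factorial k : ℝ) := by
    exact_mod_cast Nat.factorial_pos k
  have hsum : |∑ j ∈ Finset.Icc 1 (h / 2),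
      (j : ℝ) ^ ((h - 1) * k) *
        ∫ t in (0:ℝ)..(1:ℝ),
          (∑ i ∈ Finset.range (j + 1),
            (-1 : ℝ) ^ i * (Nat.choose h i : ℝ) *
              (1 - ((i : ℝ) - t) / (j : ℝ)) ^ (h - 1)) ^ k|
      ≤ (h:ℝ) * (((h:ℝ) ^ (h - 1)) ^ k * (2 ^ (2 * h)) ^ k) := by
    refine (Finset.abs_sum_le_sum_abs _ _).trans ?_
    have hterm : ∀ j ∈ Finset.Icc 1 (h / 2),
        |(j : ℝ) ^ ((h - 1) * k) *
        ∫ t in (0:ℝ)..(1:ℝ),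
          (∑ i ∈ Finset.range (j + 1),
            (-1 : ℝ) ^ i * (Nat.choose h i : ℝ) *
              (1 - ((i : ℝ) - t) / (j : ℝ)) ^ (h - 1)) ^ k|
        ≤ ((h:ℝ) ^ (h - 1)) ^ k * (2 ^ (2 * h)) ^ k := by
      intro j hj
      obtain ⟨hj1, hj2⟩ := Finset.mem_Icc.mp hj
      rw [abs_mul]
      have hint : ‖∫ t in (0:ℝ)..(1:ℝ),
          (∑ i ∈ Finset.range (j + 1),
            (-1 : ℝ) ^ i * (Nat.choose h i : ℝ) *
              (1 - ((i : ℝ) - t) / (j : ℝ)) ^ (h - 1)) ^ k‖ ≤ ((2:ℝ) ^ (2 * h)) ^ k * |1 - 0| := by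
        apply intervalIntegral.norm_integral_le_of_norm_le_const
        intro t ht
        rw [Real.norm_eq_abs, abs_pow]
        exact pow_le_pow_left₀ (abs_nonneg _) (inner_sum_bound h j hj1 t ht) k
      rw [Real.norm_eq_abs] at hint
      simp only [sub_zero, abs_one, mul_one] at hint
      have hjh : (j:ℝ) ≤ h := by
        exact_mod_cast hj2.trans (Nat.div_le_self h 2)
      have hjabs : |(j : ℝ) ^ ((h - 1) * k)| ≤ ((h:ℝ) ^ (h - 1)) ^ k := by
        rw [abs_pow, Nat.abs_cast, ← pow_mul]
        exact pow_le_pow_left₀ (Nat.cast_nonneg j) hjh _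
      exact mul_le_mul hjabs hint (abs_nonneg _) (by positivity)
    refine (Finset.sum_le_sum hterm).trans ?_
    rw [Finset.sum_const, nsmul_eq_mul]
    apply mul_le_mul_of_nonneg_right _ (by positivity)
    simp only [Nat.card_Icc]
    have : h / 2 + 1 - 1 ≤ h := by omega
    exact_mod_cast this
  rw [bConst, abs_mul, abs_mul]
  have habs1 : |1 / ((Nat.factorial k : ℝ) * (Nat.factorial (h - 1) : ℝ) ^ k)|
      ≤ 1 / (Nat.factorial k : ℝ) := by
    rw [abs_of_pos (by positivity)]
    rw [div_le_div_iff₀ (by positivity) hfk]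
    have : (1:ℝ) ≤ (Nat.factorial (h - 1) : ℝ) ^ k := one_le_pow₀ hfac1
    nlinarith
  have habs2 : |(2:ℝ)| = 2 := by norm_num
  rw [habs2]
  calc |1 / ((Nat.factorial k : ℝ) * (Nat.factorial (h - 1) : ℝ) ^ k)| * (2 * |∑ j ∈ Finset.Icc 1 (h / 2),
      (j : ℝ) ^ ((h - 1) * k) *
        ∫ t in (0:ℝ)..(1:ℝ),
          (∑ i ∈ Finset.range (j + 1),
            (-1 : ℝ) ^ i * (Nat.choose h i : ℝ) *
              (1 - ((i : ℝ) - t) / (j : ℝ)) ^ (h - 1)) ^ k|)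
      ≤ (1 / (Nat.factorial k : ℝ)) * (2 * ((h:ℝ) * (((h:ℝ) ^ (h - 1)) ^ k * (2 ^ (2 * h)) ^ k))) := by
        apply mul_le_mul habs1 _ (by positivity) (by positivity)
        apply mul_le_mul_of_nonneg_left hsum (by norm_num)
    _ = 2 * h * ((h:ℝ) ^ (h - 1) * 2 ^ (2 * h)) ^ k / (Nat.factorial k) := by
        rw [mul_pow]; ring

/-- The series `g(x; s, d) = Σ_{k=1}^∞ (−1)^{k−1} (b_{h,k}/(s!d!)^k) x^{hk}` converges
for every real `x` (here the summation index `k ≥ 1` is written as `k + 1`, `k : ℕ`). -/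
theorem gFun_summable (s d : ℕ) (hsd : d ≤ s) (hh : 2 ≤ s + d) (x : ℝ) :
    Summable (fun k : ℕ => (-1 : ℝ) ^ k *
      (bConst (s + d) (k + 1) / ((Nat.factorial s * Nat.factorial d : ℕ) : ℝ) ^ (k + 1)) *
      x ^ ((s + d) * (k + 1))) := by
  set h := s + d with hdef
  set C : ℝ := (h:ℝ) ^ (h - 1) * 2 ^ (2 * h) with hC
  have hC0 : 0 ≤ C := by positivity
  set r : ℝ := C * |x| ^ h with hr
  have hr0 : 0 ≤ r := by positivity
  have hN : (1:ℝ) ≤ ((Nat.factorial s * Nat.factorial d : ℕ) : ℝ) := by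
    exact_mod_cast Nat.one_le_iff_ne_zero.mpr
      (Nat.mul_ne_zero (Nat.factorial_ne_zero s) (Nat.factorial_ne_zero d))
  have hsummable : Summable (fun k : ℕ => 2 * (h:ℝ) * r * (r ^ k / (Nat.factorial k))) :=
    (Real.summable_pow_div_factorial r).mul_left _
  refine Summable.of_norm_bounded hsummable fun k => ?_
  rw [Real.norm_eq_abs, abs_mul, abs_mul, abs_pow, abs_neg, abs_one, one_pow, one_mul]
  have hb := bConst_bound h (k + 1)
  have hNk : (1:ℝ) ≤ ((Nat.factorial s * Nat.factorial d : ℕ) : ℝ) ^ (k + 1) :=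
    one_le_pow₀ hN
  have habsdiv : |bConst h (k + 1) / ((Nat.factorial s * Nat.factorial d : ℕ) : ℝ) ^ (k + 1)|
      ≤ |bConst h (k + 1)| := by
    rw [abs_div,
      abs_of_pos (by positivity : (0:ℝ) < ((Nat.factorial s * Nat.factorial d : ℕ) : ℝ) ^ (k + 1))]
    exact div_le_self (abs_nonneg _) hNk
  have hxpow : |x ^ (h * (k + 1))| = (|x| ^ h) ^ (k + 1) := by
    rw [abs_pow, pow_mul]
  calc |bConst h (k + 1) / ((Nat.factorial s * Nat.factorial d : ℕ) : ℝ) ^ (k + 1)|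
        * |x ^ (h * (k + 1))|
      ≤ (2 * h * C ^ (k + 1) / (Nat.factorial (k + 1))) * (|x| ^ h) ^ (k + 1) := by
        rw [hxpow]
        exact mul_le_mul (habsdiv.trans hb) le_rfl (by positivity) (by positivity)
    _ = 2 * h * (r ^ (k + 1) / (Nat.factorial (k + 1))) := by
        rw [hr, mul_pow]; ring
    _ ≤ 2 * (h:ℝ) * r * (r ^ k / (Nat.factorial k)) := by
        have hfle : (Nat.factorial k : ℝ) ≤ (Nat.factorial (k+1) : ℝ) := by
          exact_mod_cast Nat.factorial_le (Nat.le_succ k)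
        have hstep : r ^ (k + 1) / (Nat.factorial (k + 1)) ≤ r * (r ^ k / (Nat.factorial k)) := by
          rw [pow_succ, mul_comm (r ^ k) r, mul_div_assoc]
          gcongr
        have := mul_le_mul_of_nonneg_left hstep (by positivity : (0:ℝ) ≤ 2 * (h:ℝ))
        linarith [this]
end

section
/- Fix integers s ≥ d ≥ 0 with h := s + d ≥ 2. There exists a constant C, depending only on h, such that for every N ≥ 1 and every integer n with −dN ≤ n ≤ sN, writing n' := n + dN and j := ⌊n'/N⌋, one has | R_N(n,s,d) − (1/(h−1)!)·Σ_{i=0}^{j} (−1)^i·C(h,i)·(n' − iN)^{h−1} | ≤ C·N^{h−2}. -/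
open Finset

open Classical in
/-- `Rcount N n s d` is the number of ordered `(s+d)`-tuples `(a₁, …, a_{s+d})` with
entries in `{0, …, N}` such that `a₁ + ⋯ + a_s − a_{s+1} − ⋯ − a_{s+d} = n`. -/
def Rcount (N : ℕ) (n : ℤ) (s d : ℕ) : ℕ :=
  ((Fintype.piFinset fun _ : Fin (s + d) => Finset.range (N + 1)).filter fun a =>
    (∑ i : Fin (s + d), if (i : ℕ) < s then (a i : ℤ) else -(a i : ℤ)) = n).card

def V (r : ℕ) (k : ℤ) : ℤ := if 0 ≤ k then ((k.toNat + r).choose r : ℤ) else 0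

lemma V_pascal (r : ℕ) (k : ℤ) : V (r+1) k - V (r+1) (k-1) = V r k := by
  unfold V
  rcases lt_trichotomy k 0 with h | h | h
  · rw [if_neg (by omega), if_neg (by omega), if_neg (by omega)]; ring
  · subst h; norm_num
  · rw [if_pos (by omega), if_pos (by omega), if_pos (by omega)]
    have h1 : k.toNat = (k-1).toNat + 1 := by omega
    rw [h1]
    have := Nat.choose_succ_succ ((k-1).toNat + 1 + r) r
    push_cast [show (k-1).toNat + 1 + (r+1) = ((k-1).toNat + 1 + r) + 1 by ring,
      Nat.choose_succ_succ ((k-1).toNat + 1 + r) r,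
      show (k-1).toNat + (r+1) = (k-1).toNat + 1 + r by ring]
    ring

lemma V_hockey (r N : ℕ) (k : ℤ) :
    ∑ a ∈ range (N+1), V r (k - a) = V (r+1) k - V (r+1) (k - (N+1)) := by
  induction N with
  | zero => simpa using (V_pascal r k).symm
  | succ N ih =>
      rw [Finset.sum_range_succ, ih]
      have := V_pascal r (k - (N+1))
      push_cast
      push_cast at this
      rw [show k - ((N:ℤ)+1) - 1 = k - ((N:ℤ)+1+1) by ring] at this
      linarith [this]

def Scount (N h : ℕ) (x : ℤ) : ℕ :=
  ((Fintype.piFinset fun _ : Fin h => Finset.range (N + 1)).filter fun a =>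
    (∑ i : Fin h, (a i : ℤ)) = x).card

lemma Scount_zero (N : ℕ) (x : ℤ) : Scount N 0 x = if x = 0 then 1 else 0 := by
  unfold Scount
  split_ifs with h
  · subst h
    rw [Finset.card_eq_one]
    exact ⟨fun i => 0, by
      ext f; simp only [Finset.mem_filter, Fintype.mem_piFinset, Finset.mem_singleton]
      constructor
      · intro _; exact Subsingleton.elim _ _
      · intro h; subst h; simp⟩
  · rw [Finset.card_eq_zero]
    ext f
    simp only [Finset.mem_filter, Fintype.mem_piFinset, Finset.notMem_empty, iff_false, not_and]
    intro _
    exact fun e => h e.symm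

lemma Scount_succ (N h : ℕ) (x : ℤ) :
    Scount N (h+1) x = ∑ a ∈ range (N+1), Scount N h (x - a) := by
  classical
  unfold Scount
  rw [Finset.card_eq_sum_card_fiberwise (f := fun f => f 0)
    (t := range (N+1)) (by intro f hf; exact Fintype.mem_piFinset.mp (Finset.mem_filter.mp hf).1 0)]
  refine Finset.sum_congr rfl fun a ha => ?_
  apply Finset.card_bij (fun f _ => Fin.tail f)
  · intro f hf
    simp only [Finset.mem_filter, Fintype.mem_piFinset] at hf ⊢
    obtain ⟨⟨h1, h2⟩, h3⟩ := hf
    refine ⟨fun i => h1 i.succ, ?_⟩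
    have := Fin.sum_univ_succ (fun i : Fin (h+1) => (f i : ℤ))
    rw [h3] at this
    simp only [Fin.tail]
    omega
  · intro f hf g hg hfg
    simp only [Finset.mem_filter] at hf hg
    funext i
    rcases Fin.eq_zero_or_eq_succ i with h0 | ⟨j, rfl⟩
    · subst h0; omega
    · exact congrFun hfg j
  · intro g hg
    simp only [Finset.mem_filter, Fintype.mem_piFinset] at hg
    refine ⟨Fin.cons a g, ?_, ?_⟩
    · simp only [Finset.mem_filter, Fintype.mem_piFinset]
      refine ⟨⟨fun i => ?_, ?_⟩, by simp [Fin.cons]⟩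
      · rcases Fin.eq_zero_or_eq_succ i with h0 | ⟨j, rfl⟩
        · subst h0; simpa using (Finset.mem_range.mp ha)
        · simpa using hg.1 j
      · rw [Fin.sum_univ_succ]
        simp only [Fin.cons_zero, Fin.cons_succ]
        omega
    · exact funext fun i => rfl

lemma Scount_one (N : ℕ) (x : ℤ) :
    (Scount N 1 x : ℤ) = V 0 x - V 0 (x - (N+1)) := by
  rw [Scount_succ]
  push_cast [Scount_zero]
  have h1 : ∑ a ∈ range (N+1), (if x - (a:ℤ) = 0 then (1:ℤ) else 0)
      = if 0 ≤ x ∧ x ≤ N then 1 else 0 := by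
    split_ifs with hx
    · rw [Finset.sum_eq_single x.toNat]
      · rw [if_pos (by omega)]
      · intro a ha hne
        rw [if_neg]
        have := Finset.mem_range.mp ha
        omega
      · intro hmem
        exact absurd (Finset.mem_range.mpr (by omega)) hmem
    · apply Finset.sum_eq_zero
      intro a ha
      have := Finset.mem_range.mp ha
      rw [if_neg (by omega)]
  rw [h1]
  unfold V
  split_ifs <;> simp_all <;> omega

lemma Scount_formula (N r : ℕ) (x : ℤ) :
    (Scount N (r+1) x : ℤ)
      = ∑ i ∈ range (r+2), (-1)^i * ((r+1).choose i : ℤ) * V r (x - i*(N+1)) := by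
  induction r generalizing x with
  | zero =>
      rw [Scount_one]
      rw [Finset.sum_range_succ, Finset.sum_range_succ]
      simp
      push_cast
      ring_nf
  | succ r ih =>
      rw [Scount_succ]
      push_cast [ih]
      rw [Finset.sum_comm]
      have step : ∀ i ∈ range (r+2),
          ∑ a ∈ range (N+1), (-1:ℤ)^i * ((r+1).choose i : ℤ) * V r (x - a - i*(N+1))
          = (-1)^i * ((r+1).choose i : ℤ) *
              (V (r+1) (x - i*(N+1)) - V (r+1) (x - (i+1)*(N+1))) := by
        intro i _
        rw [← Finset.mul_sum]
        congr 1
        have := V_hockey r N (x - i*(N+1))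
        rw [show x - (i:ℤ)*(N+1) - (N+1) = x - ((i:ℤ)+1)*(N+1) by ring] at this
        rw [← this]
        apply Finset.sum_congr rfl
        intro a _
        ring_nf
      rw [Finset.sum_congr rfl step]
      -- now Abel summation / Pascal reindex
      have expand : ∑ i ∈ range (r+2), (-1:ℤ)^i * ((r+1).choose i : ℤ) *
              (V (r+1) (x - i*(N+1)) - V (r+1) (x - (i+1)*(N+1)))
          = (∑ i ∈ range (r+2), (-1:ℤ)^i * ((r+1).choose i : ℤ) * V (r+1) (x - i*(N+1)))
            + (∑ i ∈ range (r+2), (-1:ℤ)^(i+1) * ((r+1).choose i : ℤ) *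
                V (r+1) (x - (i+1)*(N+1))) := by
        rw [← Finset.sum_add_distrib]
        apply Finset.sum_congr rfl
        intro i _
        ring
      rw [expand]
      have shift : ∑ i ∈ range (r+2), (-1:ℤ)^(i+1) * ((r+1).choose i : ℤ) *
                V (r+1) (x - (i+1)*(N+1))
          = ∑ i ∈ range (r+3), (if i = 0 then 0 else (-1:ℤ)^i * ((r+1).choose (i-1) : ℤ) *
                V (r+1) (x - i*(N+1))) := by
        rw [Finset.sum_range_succ' (n := r+2)]
        simp only [if_pos rfl, Nat.succ_ne_zero, if_neg, add_zero, reduceIte]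
        apply Finset.sum_congr rfl
        intro i _
        simp only [Nat.add_sub_cancel]
        push_cast
        ring_nf
      rw [shift]
      have ext1 : ∑ i ∈ range (r+2), (-1:ℤ)^i * ((r+1).choose i : ℤ) * V (r+1) (x - i*(N+1))
          = ∑ i ∈ range (r+3), (-1:ℤ)^i * ((r+1).choose i : ℤ) * V (r+1) (x - i*(N+1)) := by
        rw [Finset.sum_range_succ (n := r+2)]
        rw [Nat.choose_eq_zero_of_lt (by omega)]
        push_cast
        ring
      rw [ext1, ← Finset.sum_add_distrib]
      apply Finset.sum_congr (by norm_num)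
      intro i hi
      rcases Nat.eq_zero_or_eq_succ_pred i with h0 | hs
      · subst h0; simp
      · rw [hs, if_neg (Nat.succ_ne_zero _)]
        have pas := Nat.choose_succ_succ (r+1) i.pred
        simp only [Nat.succ_eq_add_one] at pas
        simp only [Nat.succ_eq_add_one, Nat.add_sub_cancel]
        push_cast [pas]
        ring

def shiftEmb (s d : ℕ) : Fin d ↪ Fin (s+d) where
  toFun j := ⟨s + j.val, by have := j.isLt; omega⟩
  inj' := by
    intro j j' hj
    apply Fin.ext
    have := congrArg Fin.val hj
    simpa using this

lemma sum_indicator_ge (s d N : ℕ) :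
    ∑ i : Fin (s+d), (if (i:ℕ) < s then (0:ℤ) else (N:ℤ)) = d * N := by
  classical
  rw [Finset.sum_ite, Finset.sum_const_zero, zero_add, Finset.sum_const, nsmul_eq_mul]
  have hcard : (Finset.univ.filter (fun i : Fin (s+d) => ¬ (i:ℕ) < s)).card = d := by
    rw [show (Finset.univ.filter (fun i : Fin (s+d) => ¬ (i:ℕ) < s))
        = Finset.map (shiftEmb s d) Finset.univ from ?_]
    · simp
    · ext i
      simp only [Finset.mem_filter, Finset.mem_map, Finset.mem_univ, true_and, shiftEmb,
        Function.Embedding.coeFn_mk]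
      constructor
      · intro hi
        refine ⟨⟨(i:ℕ) - s, by have := i.isLt; omega⟩, Fin.ext ?_⟩
        show s + ((i:ℕ) - s) = (i:ℕ)
        omega
      · rintro ⟨j, rfl⟩
        simp only [not_lt]
        exact Nat.le_add_right s j.val
  rw [hcard]

lemma Rcount_eq_Scount (N : ℕ) (n : ℤ) (s d : ℕ) :
    Rcount N n s d = Scount N (s + d) (n + d * N) := by
  classical
  unfold Rcount Scount
  apply Finset.card_bij' (fun a _ => fun i : Fin (s+d) => if (i:ℕ) < s then a i else N - a i)
    (fun a _ => fun i : Fin (s+d) => if (i:ℕ) < s then a i else N - a i)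
  · intro a ha
    simp only [Finset.mem_filter, Fintype.mem_piFinset, Finset.mem_range] at ha ⊢
    obtain ⟨h1, h2⟩ := ha
    refine ⟨fun i => by split_ifs with h; exacts [h1 i, by omega], ?_⟩
    have key : ∀ i : Fin (s+d),
        ((if (i:ℕ) < s then a i else N - a i : ℕ) : ℤ)
          = (if (i:ℕ) < s then (a i : ℤ) else -(a i : ℤ)) + (if (i:ℕ) < s then 0 else (N:ℤ)) := by
      intro i
      have := h1 i
      split_ifs with h <;> push_cast <;> omega
    rw [Finset.sum_congr rfl (fun i _ => key i), Finset.sum_add_distrib, h2,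
      sum_indicator_ge s d N]
  · intro a ha
    simp only [Finset.mem_filter, Fintype.mem_piFinset, Finset.mem_range] at ha ⊢
    obtain ⟨h1, h2⟩ := ha
    refine ⟨fun i => by split_ifs with h; exacts [h1 i, by omega], ?_⟩
    have key : ∀ i : Fin (s+d),
        (if (i:ℕ) < s then (((if (i:ℕ) < s then a i else N - a i : ℕ)) : ℤ)
          else -(((if (i:ℕ) < s then a i else N - a i : ℕ)) : ℤ))
          = ((a i : ℤ) - if (i:ℕ) < s then 0 else (N:ℤ)) := by
      intro i
      have h1i := h1 i
      split_ifs with h <;> push_cast <;> omega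
    rw [Finset.sum_congr rfl (fun i _ => key i), Finset.sum_sub_distrib, h2,
      sum_indicator_ge s d N]
    ring
  · intro a ha
    simp only [Finset.mem_filter, Fintype.mem_piFinset, Finset.mem_range] at ha
    funext i
    have := ha.1 i
    simp only []
    split_ifs with h <;> omega
  · intro a ha
    simp only [Finset.mem_filter, Fintype.mem_piFinset, Finset.mem_range] at ha
    funext i
    have := ha.1 i
    simp only []
    split_ifs with h <;> omega

lemma abs_prod_le (n : ℕ) (b : ℕ → ℝ) (M : ℝ) (hM : 0 ≤ M) (hb : ∀ r < n, |b r| ≤ M) :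
    |∏ r ∈ range n, b r| ≤ M ^ n := by
  rw [Finset.abs_prod]
  calc ∏ r ∈ range n, |b r| ≤ ∏ r ∈ range n, M :=
        Finset.prod_le_prod (fun r _ => abs_nonneg _)
          (fun r hr => hb r (Finset.mem_range.mp hr))
    _ = M ^ n := by rw [Finset.prod_const, Finset.card_range]

lemma abs_prod_sub_prod (n : ℕ) (a b : ℕ → ℝ) (M D : ℝ) (hM : 0 ≤ M) (hD : 0 ≤ D)
    (ha : ∀ r < n, |a r| ≤ M) (hb : ∀ r < n, |b r| ≤ M) (hab : ∀ r < n, |a r - b r| ≤ D) :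
    |∏ r ∈ range n, a r - ∏ r ∈ range n, b r| ≤ n * D * M ^ (n - 1) := by
  induction n with
  | zero => simp
  | succ n ih =>
      have ih' := ih (fun r hr => ha r (by omega)) (fun r hr => hb r (by omega))
        (fun r hr => hab r (by omega))
      rw [Finset.prod_range_succ, Finset.prod_range_succ]
      have key : (∏ r ∈ range n, a r) * a n - (∏ r ∈ range n, b r) * b n
          = a n * (∏ r ∈ range n, a r - ∏ r ∈ range n, b r)
            + (a n - b n) * ∏ r ∈ range n, b r := by ring
      rw [key]
      calc |a n * (∏ r ∈ range n, a r - ∏ r ∈ range n, b r)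
            + (a n - b n) * ∏ r ∈ range n, b r|
          ≤ |a n| * |∏ r ∈ range n, a r - ∏ r ∈ range n, b r|
            + |a n - b n| * |∏ r ∈ range n, b r| := by
            calc _ ≤ |a n * (∏ r ∈ range n, a r - ∏ r ∈ range n, b r)|
                + |(a n - b n) * ∏ r ∈ range n, b r| := abs_add_le _ _
              _ = _ := by rw [abs_mul, abs_mul]
        _ ≤ M * (n * D * M ^ (n-1)) + D * M ^ n := by
            apply add_le_add
            · exact mul_le_mul (ha n (by omega)) ih' (abs_nonneg _) hM
            · exact mul_le_mul (hab n (by omega))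
                (abs_prod_le n b M hM (fun r hr => hb r (by omega))) (abs_nonneg _) hD
        _ ≤ ((n:ℝ)+1) * D * M ^ ((n+1) - 1) := by
            rcases Nat.eq_zero_or_pos n with rfl | hn
            · simp
            · have hM1 : M * M ^ (n-1) = M ^ n := by
                rw [← pow_succ']
                congr 1
                omega
              have h1 : M * (n * D * M ^ (n-1)) = n * D * M ^ n := by
                rw [← hM1]; ring
              rw [h1, Nat.add_sub_cancel]
              nlinarith [pow_nonneg hM n]
        _ = (↑(n+1)) * D * M ^ ((n+1) - 1) := by push_cast; ring

lemma factorial_mul_V (r : ℕ) (k : ℤ) (hk : 0 ≤ k) :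
    (r.factorial : ℤ) * V r k = ∏ t ∈ range r, (k + 1 + t) := by
  have hnat : ∀ m : ℕ, (m+1).ascFactorial r = ∏ t ∈ range r, (m + 1 + t) := by
    intro m
    induction r with
    | zero => simp
    | succ r ih =>
        rw [Finset.prod_range_succ, ← ih, Nat.ascFactorial_succ]
        ring
  unfold V
  rw [if_pos hk]
  have := Nat.ascFactorial_eq_factorial_mul_choose k.toNat r
  rw [hnat k.toNat] at this
  have cast := congrArg (fun m : ℕ => (m : ℤ)) this
  simp only [Nat.cast_prod, Nat.cast_mul] at cast
  rw [← cast]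
  push_cast
  apply Finset.prod_congr rfl
  intro t _
  omega

set_option maxHeartbeats 1000000 in
lemma key_est (h N : ℕ) (hh : 2 ≤ h) (hN : 1 ≤ N) (x : ℤ) (hx0 : 0 ≤ x) (hx1 : x ≤ h * N)
    (i : ℕ) (hi : i ≤ h) :
    |((((h-1).factorial * V (h-1) (x - i * ((N:ℤ)+1)) : ℤ)) : ℝ)
        - (max ((x:ℝ) - i * N) 0) ^ (h-1)|
      ≤ ((h:ℝ) * (2*h) * (2*h)^(h-2) + h^h) * (N:ℝ)^(h-2) := by
  have hNR : (1:ℝ) ≤ (N:ℝ) := by exact_mod_cast hN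
  have hhR : (2:ℝ) ≤ (h:ℝ) := by exact_mod_cast hh
  have hiR : (i:ℝ) ≤ (h:ℝ) := by exact_mod_cast hi
  have hx1R : (x:ℝ) ≤ (h:ℝ) * N := by exact_mod_cast hx1
  have hx0R : (0:ℝ) ≤ (x:ℝ) := by exact_mod_cast hx0
  set k : ℤ := x - i * ((N:ℤ)+1) with hk
  have hkxR : (k:ℝ) = (x:ℝ) - i*(N+1) := by rw [hk]; push_cast; ring
  have hxiN : (x:ℝ) - i * N = (k:ℝ) + i := by rw [hkxR]; ring
  rcases le_or_gt 0 k with hk0 | hk0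
  · -- main case : k ≥ 0
    have hk0R : (0:ℝ) ≤ (k:ℝ) := by exact_mod_cast hk0
    have hmax : max ((x:ℝ) - i * N) 0 = (k:ℝ) + i := by
      rw [hxiN]
      apply max_eq_left
      positivity
    rw [hmax, factorial_mul_V (h-1) k hk0]
    push_cast
    have hpow : ((k:ℝ) + i) ^ (h-1) = ∏ t ∈ range (h-1), ((k:ℝ) + i) := by
      rw [Finset.prod_const, Finset.card_range]
    rw [hpow]
    have hkhN : (k:ℝ) ≤ (h:ℝ) * N := by
      rw [hkxR]
      nlinarith
    have hhN : (h:ℝ) ≤ (h:ℝ) * N := by nlinarith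
    have bound := abs_prod_sub_prod (h-1) (fun t => (k:ℝ) + 1 + t) (fun _ => (k:ℝ) + i)
      (2*h*N) (2*h) (by positivity) (by positivity)
      (fun t ht => by
        show |(k:ℝ) + 1 + t| ≤ 2*h*N
        have ht2 : ((t:ℝ)) + 2 ≤ (h:ℝ) := by exact_mod_cast (show t + 2 ≤ h by omega)
        have ht0 : (0:ℝ) ≤ (t:ℝ) := by positivity
        rw [abs_of_nonneg (by positivity)]
        nlinarith)
      (fun t ht => by
        show |(k:ℝ) + i| ≤ 2*h*N
        have hki : (0:ℝ) ≤ (k:ℝ) + i := by positivity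
        rw [abs_of_nonneg hki]
        have : (k:ℝ) + i ≤ (h:ℝ)*N := by
          rw [hkxR]
          have hiN : (0:ℝ) ≤ (i:ℝ)*N := by positivity
          nlinarith
        nlinarith)
      (fun t ht => by
        show |((k:ℝ) + 1 + t) - ((k:ℝ) + i)| ≤ 2*h
        have ht2 : ((t:ℝ)) + 2 ≤ (h:ℝ) := by exact_mod_cast (show t + 2 ≤ h by omega)
        have ht0 : (0:ℝ) ≤ (t:ℝ) := by positivity
        have hi0 : (0:ℝ) ≤ (i:ℝ) := by positivity
        rw [abs_le]
        constructor <;> nlinarith)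
    calc |∏ t ∈ range (h-1), ((k:ℝ) + 1 + t) - ∏ t ∈ range (h-1), ((k:ℝ) + i)|
        ≤ ((h-1 : ℕ):ℝ) * (2*h) * (2*h*(N:ℝ)) ^ ((h-1) - 1) := bound
      _ ≤ (h:ℝ) * (2*h) * (2*h*(N:ℝ)) ^ (h-2) := by
          have e : (h-1) - 1 = h - 2 := by omega
          rw [e]
          apply mul_le_mul_of_nonneg_right _ (by positivity)
          apply mul_le_mul_of_nonneg_right _ (by positivity)
          exact_mod_cast Nat.cast_le.mpr (Nat.sub_le h 1)
      _ = (h:ℝ) * (2*h) * (2*h)^(h-2) * (N:ℝ)^(h-2) := by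
          rw [mul_pow]; ring
      _ ≤ ((h:ℝ) * (2*h) * (2*h)^(h-2) + h^h) * (N:ℝ)^(h-2) := by
          apply mul_le_mul_of_nonneg_right _ (by positivity)
          have : (0:ℝ) ≤ (h:ℝ)^h := by positivity
          linarith
  · -- k < 0 : V term vanishes
    have hV : V (h-1) k = 0 := by
      unfold V
      rw [if_neg (by omega)]
    rw [hV]
    simp only [mul_zero, Int.cast_zero, zero_sub, abs_neg]
    rw [abs_of_nonneg (by positivity)]
    rcases le_or_gt ((x:ℝ) - i * N) 0 with hy | hy
    · rw [max_eq_right hy, zero_pow (by omega : h - 1 ≠ 0)]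
      positivity
    · rw [max_eq_left hy.le]
      have hkR : (k:ℝ) ≤ -1 := by exact_mod_cast (show k ≤ -1 by omega)
      have hyh : (x:ℝ) - i * N ≤ (h:ℝ) := by
        rw [hxiN]
        nlinarith
      calc ((x:ℝ) - i * N) ^ (h-1) ≤ (h:ℝ) ^ (h-1) :=
            pow_le_pow_left₀ hy.le hyh (h-1)
        _ ≤ (h:ℝ) ^ h := pow_le_pow_right₀ (by linarith) (Nat.sub_le h 1)
        _ = (h:ℝ) ^ h * 1 := by ring
        _ ≤ (h:ℝ) ^ h * (N:ℝ)^(h-2) := by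
            exact mul_le_mul_of_nonneg_left (one_le_pow₀ hNR) (by positivity)
        _ ≤ ((h:ℝ) * (2*h) * (2*h)^(h-2) + h^h) * (N:ℝ)^(h-2) := by
            apply mul_le_mul_of_nonneg_right _ (by positivity)
            have : (0:ℝ) ≤ (h:ℝ)*(2*h)*(2*h)^(h-2) := by positivity
            linarith

set_option maxHeartbeats 1000000 in
theorem Rcount_polynomial_approx (s d : ℕ) (hsd : d ≤ s) (hh : 2 ≤ s + d) :
    ∃ C : ℝ, ∀ N : ℕ, 1 ≤ N → ∀ n : ℤ,
      -((d : ℤ) * (N : ℤ)) ≤ n → n ≤ (s : ℤ) * (N : ℤ) →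
      |(Rcount N n s d : ℝ) -
          (1 / (Nat.factorial (s + d - 1) : ℝ)) *
            ∑ i ∈ Finset.range (((n + (d : ℤ) * (N : ℤ)) / (N : ℤ)).toNat + 1),
              (-1 : ℝ) ^ i * (Nat.choose (s + d) i : ℝ) *
                (((n : ℝ) + (d : ℝ) * (N : ℝ)) - (i : ℝ) * (N : ℝ)) ^ (s + d - 1)| ≤
        C * (N : ℝ) ^ (s + d - 2) := by
  set h : ℕ := s + d with hhdef
  refine ⟨2^h * ((h:ℝ) * (2*h) * (2*h)^(h-2) + h^h), ?_⟩
  intro N hN n hn1 hn2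
  have hNpos : (0:ℤ) < (N:ℤ) := by exact_mod_cast hN
  set x : ℤ := n + (d:ℤ) * (N:ℤ) with hxdef
  have hx0 : 0 ≤ x := by omega
  have hx1 : x ≤ (h:ℤ) * N := by
    have : ((h:ℤ)) = (s:ℤ) + (d:ℤ) := by push_cast [hhdef]; ring
    rw [this]
    nlinarith
  -- exact formula
  have hform := Scount_formula N (h-1) x
  rw [show (h-1)+1 = h by omega, show (h-1)+2 = h+1 by omega] at hform
  rw [← Rcount_eq_Scount N n s d] at hform
  -- notation
  set f : ℝ := ((h-1).factorial : ℝ) with hfdef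
  have hf1 : (1:ℝ) ≤ f := by
    rw [hfdef]
    exact_mod_cast Nat.one_le_iff_ne_zero.mpr (Nat.factorial_ne_zero _)
  have hf0 : (0:ℝ) < f := lt_of_lt_of_le one_pos hf1
  set c : ℝ := (h:ℝ) * (2*h) * (2*h)^(h-2) + h^h with hcdef
  have hc0 : (0:ℝ) ≤ c := by rw [hcdef]; positivity
  -- rewrite target sum with max over full range
  set j : ℕ := (x / (N:ℤ)).toNat with hjdef
  have hjh : j + 1 ≤ h + 1 := by
    have h1 : x / (N:ℤ) ≤ ((h:ℤ) * N) / N := Int.ediv_le_ediv hNpos hx1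
    rw [Int.mul_ediv_cancel _ (by omega : (N:ℤ) ≠ 0)] at h1
    have : j ≤ h := Int.toNat_le.mpr h1
    omega
  have hTsum : ∑ i ∈ Finset.range (j + 1),
        (-1:ℝ)^i * ((h).choose i : ℝ) * (((n:ℝ) + (d:ℝ)*(N:ℝ)) - (i:ℝ)*(N:ℝ))^(h-1)
      = ∑ i ∈ Finset.range (h + 1),
        (-1:ℝ)^i * ((h).choose i : ℝ) * (max ((x:ℝ) - (i:ℝ)*(N:ℝ)) 0)^(h-1) := by
    have hxR : (x:ℝ) = (n:ℝ) + (d:ℝ)*(N:ℝ) := by rw [hxdef]; push_cast; ring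
    have step1 : ∑ i ∈ Finset.range (j + 1),
          (-1:ℝ)^i * ((h).choose i : ℝ) * (((n:ℝ) + (d:ℝ)*(N:ℝ)) - (i:ℝ)*(N:ℝ))^(h-1)
        = ∑ i ∈ Finset.range (j + 1),
          (-1:ℝ)^i * ((h).choose i : ℝ) * (max ((x:ℝ) - (i:ℝ)*(N:ℝ)) 0)^(h-1) := by
      apply Finset.sum_congr rfl
      intro i hi
      have hij : i ≤ j := by
        simp only [Finset.mem_range] at hi; omega
      have hle : (i:ℤ) * N ≤ x := by
        have h1 : (i:ℤ) ≤ x / N := by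
          have h2 : (i:ℤ) ≤ (j:ℤ) := by exact_mod_cast hij
          have hj2 : (j:ℤ) = x / N := by
            rw [hjdef]
            exact Int.toNat_of_nonneg (Int.ediv_nonneg hx0 (le_of_lt hNpos))
          omega
        exact (Int.le_ediv_iff_mul_le hNpos).mp h1
      have hleR : (i:ℝ) * N ≤ (x:ℝ) := by exact_mod_cast hle
      rw [max_eq_left (by linarith), hxR]
    rw [step1]
    apply Finset.sum_subset (Finset.range_subset_range.mpr hjh)
    intro i hi hni
    have hij : j + 1 ≤ i := by
      simp only [Finset.mem_range, not_lt] at hni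
      exact hni
    have hlt : x < (i:ℤ) * N := by
      by_contra hcon
      push_neg at hcon
      have h3 : (i:ℤ) ≤ x / N := (Int.le_ediv_iff_mul_le hNpos).mpr hcon
      have h4 : (i:ℤ) ≤ (j:ℤ) := by
        have hj2 : (j:ℤ) = x / N := by
          rw [hjdef]
          exact Int.toNat_of_nonneg (Int.ediv_nonneg hx0 (le_of_lt hNpos))
        omega
      have : i ≤ j := by exact_mod_cast h4
      omega
    have hltR : (x:ℝ) < (i:ℝ) * N := by exact_mod_cast hlt
    rw [max_eq_right (by linarith), zero_pow (by omega : h - 1 ≠ 0)]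
    ring
  rw [hTsum]
  -- key algebraic split
  have hA : f * (Rcount N n s d : ℝ)
      = ∑ i ∈ Finset.range (h+1),
          (-1:ℝ)^i * ((h).choose i : ℝ) * (((h-1).factorial * V (h-1) (x - i*((N:ℤ)+1)) : ℤ) : ℝ) := by
    have hcast := congrArg (fun z : ℤ => (z:ℝ)) hform
    push_cast at hcast
    rw [hcast, Finset.mul_sum]
    apply Finset.sum_congr rfl
    intro i _
    push_cast
    ring
  have hsplit : (Rcount N n s d : ℝ)
        - (1/f) * ∑ i ∈ Finset.range (h + 1),
            (-1:ℝ)^i * ((h).choose i : ℝ) * (max ((x:ℝ) - (i:ℝ)*(N:ℝ)) 0)^(h-1)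
      = (1/f) * ∑ i ∈ Finset.range (h+1),
          (-1:ℝ)^i * ((h).choose i : ℝ)
            * ((((h-1).factorial * V (h-1) (x - i*((N:ℤ)+1)) : ℤ) : ℝ)
                - (max ((x:ℝ) - (i:ℝ)*(N:ℝ)) 0)^(h-1)) := by
    rw [show ∑ i ∈ Finset.range (h+1),
          (-1:ℝ)^i * ((h).choose i : ℝ)
            * ((((h-1).factorial * V (h-1) (x - i*((N:ℤ)+1)) : ℤ) : ℝ)
                - (max ((x:ℝ) - (i:ℝ)*(N:ℝ)) 0)^(h-1))
        = f * (Rcount N n s d : ℝ)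
          - ∑ i ∈ Finset.range (h + 1),
            (-1:ℝ)^i * ((h).choose i : ℝ) * (max ((x:ℝ) - (i:ℝ)*(N:ℝ)) 0)^(h-1) from ?_]
    · rw [mul_sub, one_div, inv_mul_cancel_left₀ hf0.ne']
    · rw [hA, ← Finset.sum_sub_distrib]
      apply Finset.sum_congr rfl
      intro i _
      ring
  rw [hsplit, abs_mul, abs_of_pos (by positivity : (0:ℝ) < 1/f)]
  have hbound : |∑ i ∈ Finset.range (h+1),
          (-1:ℝ)^i * ((h).choose i : ℝ)
            * ((((h-1).factorial * V (h-1) (x - i*((N:ℤ)+1)) : ℤ) : ℝ)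
                - (max ((x:ℝ) - (i:ℝ)*(N:ℝ)) 0)^(h-1))|
      ≤ 2^h * (c * (N:ℝ)^(h-2)) := by
    calc |∑ i ∈ Finset.range (h+1),
          (-1:ℝ)^i * ((h).choose i : ℝ)
            * ((((h-1).factorial * V (h-1) (x - i*((N:ℤ)+1)) : ℤ) : ℝ)
                - (max ((x:ℝ) - (i:ℝ)*(N:ℝ)) 0)^(h-1))|
        ≤ ∑ i ∈ Finset.range (h+1),
            |(-1:ℝ)^i * ((h).choose i : ℝ)
            * ((((h-1).factorial * V (h-1) (x - i*((N:ℤ)+1)) : ℤ) : ℝ)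
                - (max ((x:ℝ) - (i:ℝ)*(N:ℝ)) 0)^(h-1))| :=
          Finset.abs_sum_le_sum_abs _ _
      _ ≤ ∑ i ∈ Finset.range (h+1), ((h).choose i : ℝ) * (c * (N:ℝ)^(h-2)) := by
          apply Finset.sum_le_sum
          intro i hi
          have hi' : i ≤ h := by
            simp only [Finset.mem_range] at hi; omega
          have hkey := key_est h N hh hN x hx0 hx1 i hi'
          rw [abs_mul, abs_mul, abs_pow, abs_neg, abs_one, one_pow, one_mul,
            abs_of_nonneg (by positivity : (0:ℝ) ≤ ((h).choose i : ℝ))]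
          apply mul_le_mul_of_nonneg_left _ (by positivity)
          rw [hcdef]
          exact hkey
      _ = 2^h * (c * (N:ℝ)^(h-2)) := by
          have hs : ∑ i ∈ Finset.range (h+1), ((h).choose i : ℝ) = 2^h := by
            rw [show ((2:ℝ)^h) = ((2^h : ℕ) : ℝ) by push_cast; ring,
              ← Nat.sum_range_choose h]
            push_cast
            ring
          rw [show ((2:ℝ)^h) * (c * (N:ℝ)^(h-2))
              = (∑ i ∈ Finset.range (h+1), ((h).choose i : ℝ)) * (c * (N:ℝ)^(h-2)) by rw [hs],
            Finset.sum_mul]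
  calc (1/f) * |∑ i ∈ Finset.range (h+1),
          (-1:ℝ)^i * ((h).choose i : ℝ)
            * ((((h-1).factorial * V (h-1) (x - i*((N:ℤ)+1)) : ℤ) : ℝ)
                - (max ((x:ℝ) - (i:ℝ)*(N:ℝ)) 0)^(h-1))|
      ≤ 1 * (2^h * (c * (N:ℝ)^(h-2))) := by
        apply mul_le_mul (by rw [div_le_one hf0]; exact hf1) hbound (abs_nonneg _) one_pos.le
    _ = 2^h * c * (N:ℝ)^(h-2) := by ring
end
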